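/- Let (E,‖·‖) be an RN module over ℝ with base (Ω,𝓕,P) such that E has the countable concatenation property, k ∈ L⁰₊₊(𝓕), f ∈ E*, and G an L⁰(𝓕)-convex subset of E with the countable concatenation property. If x₀ ∈ G satisfies G ∩ (K(f,k) + x₀) = {x₀}, then there exists g ∈ E* such that ⋁g(G) = g(x₀) and ‖f − g‖* ≤ k. -/

import Mathlib

open MeasureTheory ENNReal Set Filter

namespace GYY

variable {Ω : Type*} [MeasurableSpace Ω]

/-- `L⁰(𝓕)`: equivalence classes of real-valued random variables on `(Ω,𝓕,P)`. -/
abbrev L0 (P : Measure Ω) := Ω →ₘ[P] ℝ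

/-- `L̄⁰(𝓕)`: equivalence classes of extended-real-valued random variables. -/
abbrev L0e (P : Measure Ω) := Ω →ₘ[P] EReal

/-- `L⁰₊₊(𝓕)`: the (classes of) random variables that are strictly positive a.s. -/
def L0pp (P : Measure Ω) : Set (L0 P) := {ε | ∀ᵐ ω ∂P, 0 < ε ω}

/-- The equivalence class `Ĩ_A` of the indicator function of a measurable set `A`. -/
noncomputable def indL0 (P : Measure Ω) (A : Set Ω) (hA : MeasurableSet A) : L0 P :=
  AEEqFun.mk (A.indicator fun _ => (1 : ℝ)) (aestronglyMeasurable_const.indicator hA)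

/-- A random metric space (RM space) with base `(Ω,𝓕,P)`. -/
structure RMSpace (P : Measure Ω) (E : Type*) where
  d : E → E → L0 P
  d_nonneg : ∀ p q, ∀ᵐ ω ∂P, 0 ≤ d p q ω
  d_eq_zero_iff : ∀ p q, d p q = 0 ↔ p = q
  d_symm : ∀ p q, d p q = d q p
  d_triangle : ∀ p q r, ∀ᵐ ω ∂P, d p r ω ≤ d p q ω + d q r ω

/-- Convergence in probability `P` of a sequence in `L⁰(𝓕)`, i.e. convergence in the
`(ε,λ)`-topology of `L⁰(𝓕)` with the random metric `d(p,q) = |p - q|`. -/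
def TendstoProb (P : Measure Ω) (r : ℕ → L0 P) (s : L0 P) : Prop :=
  ∀ ε : ℝ, 0 < ε → ∀ lam ∈ Ioo (0 : ℝ) 1, ∃ N : ℕ, ∀ n ≥ N,
    ENNReal.ofReal (1 - lam) < P {ω | |r n ω - s ω| < ε}

namespace RMSpace

variable {P : Measure Ω} {E : Type*} (M : RMSpace P E)

/-- Convergence of a sequence in the `(ε,λ)`-topology of an RM space. -/
def TendstoEL (x : ℕ → E) (a : E) : Prop :=
  ∀ ε : ℝ, 0 < ε → ∀ lam ∈ Ioo (0 : ℝ) 1, ∃ N : ℕ, ∀ n ≥ N,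
    ENNReal.ofReal (1 - lam) < P {ω | M.d (x n) a ω < ε}

/-- Cauchy sequence for the `d_{ε,λ}`-uniformity of an RM space. -/
def CauchySeqEL (x : ℕ → E) : Prop :=
  ∀ ε : ℝ, 0 < ε → ∀ lam ∈ Ioo (0 : ℝ) 1, ∃ N : ℕ, ∀ m ≥ N, ∀ n ≥ N,
    ENNReal.ofReal (1 - lam) < P {ω | M.d (x m) (x n) ω < ε}

/-- `d_{ε,λ}`-completeness of an RM space (the `d_{ε,λ}`-uniformity is metrizable, hence
completeness is equivalent to sequential completeness). -/
def CompleteEL : Prop := ∀ x : ℕ → E, M.CauchySeqEL x → ∃ a, M.TendstoEL x a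

/-- `φ : E → L̄⁰(𝓕)` is `𝒯_{ε,λ}`-lower semicontinuous: its epigraph
`epi(φ) = {(x,r) ∈ E × L⁰ : φ(x) ≤ r}` is closed in
`(E,𝒯_{ε,λ}) × (L⁰(𝓕),𝒯_{ε,λ})` (sequentially; both topologies are metrizable). -/
def LscEL (φ : E → L0e P) : Prop :=
  ∀ (x : ℕ → E) (r : ℕ → L0 P) (a : E) (s : L0 P),
    (∀ n, ∀ᵐ ω ∂P, φ (x n) ω ≤ (r n ω : EReal)) →
    M.TendstoEL x a → TendstoProb P r s →
    ∀ᵐ ω ∂P, φ a ω ≤ (s ω : EReal)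

end RMSpace

/-- `φ` is proper on `G`: `φ(x) > -∞` a.s. for every `x ∈ G`, and `φ(x) < +∞` a.s.
for some `x ∈ G`. -/
def ProperOn {E : Type*} {P : Measure Ω} (φ : E → L0e P) (G : Set E) : Prop :=
  (∀ x ∈ G, ∀ᵐ ω ∂P, ⊥ < φ x ω) ∧ ∃ x ∈ G, ∀ᵐ ω ∂P, φ x ω < ⊤

/-- `φ` is bounded from below on `G` by an element of `L⁰(𝓕)`. -/
def BddBelowOn {E : Type*} {P : Measure Ω} (φ : E → L0e P) (G : Set E) : Prop :=
  ∃ ξ : L0 P, ∀ x ∈ G, ∀ᵐ ω ∂P, (ξ ω : EReal) ≤ φ x ω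

/-- `φ` is bounded from above on `G` by an element of `L⁰(𝓕)`. -/
def BddAboveOn {E : Type*} {P : Measure Ω} (φ : E → L0e P) (G : Set E) : Prop :=
  ∃ ξ : L0 P, ∀ x ∈ G, ∀ᵐ ω ∂P, φ x ω ≤ (ξ ω : EReal)

/-- `η = ⋀ φ(G)`, the infimum of `φ(G)` in the complete lattice `L̄⁰(𝓕)`. -/
def IsInfOn {E : Type*} {P : Measure Ω} (φ : E → L0e P) (G : Set E) (η : L0e P) : Prop :=
  (∀ x ∈ G, ∀ᵐ ω ∂P, η ω ≤ φ x ω) ∧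
    ∀ ζ : L0e P, (∀ x ∈ G, ∀ᵐ ω ∂P, ζ ω ≤ φ x ω) → ∀ᵐ ω ∂P, ζ ω ≤ η ω

/-- `η = ⋁ φ(G)`, the supremum of `φ(G)` in the complete lattice `L̄⁰(𝓕)`. -/
def IsSupOn {E : Type*} {P : Measure Ω} (φ : E → L0e P) (G : Set E) (η : L0e P) : Prop :=
  (∀ x ∈ G, ∀ᵐ ω ∂P, φ x ω ≤ η ω) ∧
    ∀ ζ : L0e P, (∀ x ∈ G, ∀ᵐ ω ∂P, φ x ω ≤ ζ ω) → ∀ᵐ ω ∂P, η ω ≤ ζ ω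

/-- `s = ⋁ g(G)` for an `L⁰(𝓕)`-valued function `g`. -/
def IsSupOnR {E : Type*} {P : Measure Ω} (g : E → L0 P) (G : Set E) (s : L0 P) : Prop :=
  (∀ x ∈ G, ∀ᵐ ω ∂P, g x ω ≤ s ω) ∧
    ∀ c : L0 P, (∀ x ∈ G, ∀ᵐ ω ∂P, g x ω ≤ c ω) → ∀ᵐ ω ∂P, s ω ≤ c ω

/-- The Cauchy property (for the `d_{ε,λ}`-uniformity of `L⁰(𝓕)`, i.e. the uniformity of
convergence in probability) of the net `{φ(m) : m ∈ M}` indexed by `M` directed by the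
order of `X`. -/
def CauchyNetProb {X : Type*} [Preorder X] {P : Measure Ω} (φ : X → L0e P) (M : Set X) : Prop :=
  ∀ ε : ℝ, 0 < ε → ∀ lam ∈ Ioo (0 : ℝ) 1, ∃ m₀ ∈ M, ∀ m₁ ∈ M, ∀ m₂ ∈ M,
    m₀ ≤ m₁ → m₀ ≤ m₂ →
      ENNReal.ofReal (1 - lam) < P {ω | |(φ m₁ ω).toReal - (φ m₂ ω).toReal| < ε}

/-- The section filter of the net `{x_g : g ∈ G}`, `x_g = g`, indexed by `G` directed by the
order of `X`; the net is Cauchy iff this filter is a Cauchy filter. -/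
def netFilter {X : Type*} [Preorder X] (G : Set X) : Filter X :=
  ⨅ g ∈ G, 𝓟 {y | y ∈ G ∧ g ≤ y}

/-- A random normed module (RN module) over `ℝ` with base `(Ω,𝓕,P)`: a left module `E`
over the algebra `L⁰(𝓕)` together with an `L⁰`-norm. -/
structure RNModule (P : Measure Ω) (E : Type*) [AddCommGroup E] where
  smul : L0 P → E → E
  one_smul : ∀ x, smul 1 x = x
  mul_smul : ∀ ξ η x, smul (ξ * η) x = smul ξ (smul η x)
  smul_add : ∀ ξ x y, smul ξ (x + y) = smul ξ x + smul ξ y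
  add_smul : ∀ ξ η x, smul (ξ + η) x = smul ξ x + smul η x
  nm : E → L0 P
  nm_nonneg : ∀ x, ∀ᵐ ω ∂P, 0 ≤ nm x ω
  nm_eq_zero_iff : ∀ x, nm x = 0 ↔ x = 0
  nm_smul : ∀ ξ x, ∀ᵐ ω ∂P, nm (smul ξ x) ω = |ξ ω| * nm x ω
  nm_add_le : ∀ x y, ∀ᵐ ω ∂P, nm (x + y) ω ≤ nm x ω + nm y ω

/-- The `𝒯_c`-neighbourhood filter of a point `r` of `L⁰(𝓕)`, with base the closed balls
`{s : |s - r| ≤ ε}`, `ε ∈ L⁰₊₊`. -/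
def cNhdsL0 (P : Measure Ω) (r : L0 P) : Filter (L0 P) :=
  ⨅ ε ∈ L0pp P, 𝓟 {s | ∀ᵐ ω ∂P, |s ω - r ω| ≤ ε ω}

namespace RNModule

variable {P : Measure Ω} {E : Type*} [AddCommGroup E] (N : RNModule P E)

/-- Convergence of sequences in the `(ε,λ)`-topology `𝒯_{ε,λ}` of an RN module. -/
def TendstoEL (x : ℕ → E) (a : E) : Prop :=
  ∀ ε : ℝ, 0 < ε → ∀ lam ∈ Ioo (0 : ℝ) 1, ∃ N' : ℕ, ∀ n ≥ N',
    ENNReal.ofReal (1 - lam) < P {ω | N.nm (x n - a) ω < ε}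

/-- Cauchy sequence for the `d_{ε,λ}`-uniformity of an RN module. -/
def CauchySeqEL (x : ℕ → E) : Prop :=
  ∀ ε : ℝ, 0 < ε → ∀ lam ∈ Ioo (0 : ℝ) 1, ∃ N' : ℕ, ∀ m ≥ N', ∀ n ≥ N',
    ENNReal.ofReal (1 - lam) < P {ω | N.nm (x m - x n) ω < ε}

/-- `𝒯_{ε,λ}`-completeness (the `d_{ε,λ}`-uniformity is metrizable, hence completeness is
equivalent to sequential completeness). -/
def CompleteEL : Prop := ∀ x : ℕ → E, N.CauchySeqEL x → ∃ a, N.TendstoEL x a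

/-- `G` is `𝒯_{ε,λ}`-closed (sequentially; `𝒯_{ε,λ}` is metrizable). -/
def ClosedEL (G : Set E) : Prop :=
  ∀ (x : ℕ → E) (a : E), (∀ n, x n ∈ G) → N.TendstoEL x a → a ∈ G

/-- `φ : G → L̄⁰(𝓕)` is `𝒯_{ε,λ}`-lower semicontinuous on `G`: its epigraph
`{(x,r) ∈ G × L⁰ : φ(x) ≤ r}` is closed in `(G,𝒯_{ε,λ}) × (L⁰(𝓕),𝒯_{ε,λ})`. -/
def LscELOn (φ : E → L0e P) (G : Set E) : Prop :=
  ∀ (x : ℕ → E) (r : ℕ → L0 P) (a : E) (s : L0 P),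
    (∀ n, x n ∈ G) → a ∈ G →
    (∀ n, ∀ᵐ ω ∂P, φ (x n) ω ≤ (r n ω : EReal)) →
    N.TendstoEL x a → TendstoProb P r s →
    ∀ᵐ ω ∂P, φ a ω ≤ (s ω : EReal)

/-- The neighbourhood filter of `x` in the locally `L⁰`-convex topology `𝒯_c`,
whose base consists of the closed balls `{y : ‖y - x‖ ≤ ε}`, `ε ∈ L⁰₊₊`. -/
def cNhds (x : E) : Filter E :=
  ⨅ ε ∈ L0pp P, 𝓟 {y | ∀ᵐ ω ∂P, N.nm (y - x) ω ≤ ε ω}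

/-- The `d_c`-uniformity of an RN module, with base `{U(ε) : ε ∈ L⁰₊₊}`,
`U(ε) = {(p,q) : ‖p - q‖ ≤ ε}`. -/
def cUniformity : Filter (E × E) :=
  ⨅ ε ∈ L0pp P, 𝓟 {p | ∀ᵐ ω ∂P, N.nm (p.1 - p.2) ω ≤ ε ω}

/-- `𝒯_c`-completeness: every Cauchy filter for the `d_c`-uniformity converges. -/
def cComplete : Prop :=
  ∀ F : Filter E, F.NeBot → F ×ˢ F ≤ N.cUniformity → ∃ x, F ≤ N.cNhds x

/-- The `𝒯_c`-closure of a subset. -/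
def cClosure (G : Set E) : Set E := {x | (N.cNhds x ⊓ 𝓟 G).NeBot}

/-- `G` is `𝒯_c`-closed. -/
def cClosed (G : Set E) : Prop := ∀ x, x ∈ N.cClosure G → x ∈ G

/-- `S` is `𝒯_c`-dense in `T`. -/
def cDenseIn (S T : Set E) : Prop := ∀ x ∈ T, x ∈ N.cClosure S

/-- The `𝒯_c`-boundary `∂_c G`. -/
def cBoundary (G : Set E) : Set E := N.cClosure G ∩ N.cClosure Gᶜ

/-- `φ : G → L̄⁰(𝓕)` is `𝒯_c`-lower semicontinuous on `G`: its epigraph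
`{(x,r) ∈ G × L⁰ : φ(x) ≤ r}` is closed in `(G,𝒯_c) × (L⁰(𝓕),𝒯_c)`. -/
def cLscOn (φ : E → L0e P) (G : Set E) : Prop :=
  ∀ (a : E) (s : L0 P), a ∈ G →
    ((N.cNhds a ×ˢ cNhdsL0 P s) ⊓
      𝓟 {p : E × L0 P | p.1 ∈ G ∧ ∀ᵐ ω ∂P, φ p.1 ω ≤ (p.2 ω : EReal)}).NeBot →
    ∀ᵐ ω ∂P, φ a ω ≤ (s ω : EReal)

/-- The countable concatenation property of a subset `G` of an RN module. -/
def HasCC (G : Set E) : Prop :=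
  ∀ (x : ℕ → E), (∀ n, x n ∈ G) →
    ∀ (A : ℕ → Set Ω) (hA : ∀ n, MeasurableSet (A n)),
      (∀ i j, i ≠ j → Disjoint (A i) (A j)) → (⋃ n, A n) = univ →
        ∃ y ∈ G, ∀ n, N.smul (indL0 P (A n) (hA n)) y = N.smul (indL0 P (A n) (hA n)) (x n)

/-- The countable concatenation property of a subset of the product `L⁰(𝓕)`-module
`E × L⁰(𝓕)` (with componentwise module operations). -/
def HasCCProd (G : Set (E × L0 P)) : Prop :=
  ∀ (p : ℕ → E × L0 P), (∀ n, p n ∈ G) →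
    ∀ (A : ℕ → Set Ω) (hA : ∀ n, MeasurableSet (A n)),
      (∀ i j, i ≠ j → Disjoint (A i) (A j)) → (⋃ n, A n) = univ →
        ∃ q ∈ G, ∀ n,
          N.smul (indL0 P (A n) (hA n)) q.1 = N.smul (indL0 P (A n) (hA n)) (p n).1 ∧
          indL0 P (A n) (hA n) * q.2 = indL0 P (A n) (hA n) * (p n).2

/-- The local property of an `L̄⁰(𝓕)`-valued function:
`Ĩ_A·φ(x) = Ĩ_A·φ(Ĩ_A·x)` for all `x ∈ E`, `A ∈ 𝓕`, i.e. `φ(x) = φ(Ĩ_A x)` a.s. on `A`. -/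
def LocalProp (φ : E → L0e P) : Prop :=
  ∀ (x : E) (A : Set Ω) (hA : MeasurableSet A),
    ∀ᵐ ω ∂P, ω ∈ A → φ x ω = φ (N.smul (indL0 P A hA) x) ω

/-- `G` is `L⁰(𝓕)`-convex. -/
def L0Convex (G : Set E) : Prop :=
  ∀ x ∈ G, ∀ y ∈ G, ∀ ξ η : L0 P,
    (∀ᵐ ω ∂P, 0 ≤ ξ ω) → (∀ᵐ ω ∂P, 0 ≤ η ω) → ξ + η = 1 →
      N.smul ξ x + N.smul η y ∈ G

/-- `G` is a.s. bounded: `⋁{‖p‖ : p ∈ G} ∈ L⁰₊(𝓕)`. -/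
def ASBounded (G : Set E) : Prop :=
  ∃ ξ : L0 P, ∀ p ∈ G, ∀ᵐ ω ∂P, N.nm p ω ≤ ξ ω

/-- Membership in the random conjugate space `E*`: `f` is an a.s. bounded random linear
functional, i.e. an `L⁰(𝓕)`-linear map `f : E → L⁰(𝓕)` with `|f(x)| ≤ ξ·‖x‖` for all `x`
for some `ξ ∈ L⁰₊(𝓕)`. -/
def IsDual (f : E → L0 P) : Prop :=
  (∀ x y, f (x + y) = f x + f y) ∧
  (∀ (ξ : L0 P) (x : E), f (N.smul ξ x) = ξ * f x) ∧
  ∃ ξ : L0 P, (∀ᵐ ω ∂P, 0 ≤ ξ ω) ∧ ∀ x, ∀ᵐ ω ∂P, |f x ω| ≤ ξ ω * N.nm x ω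

/-- `nf = ‖f‖* := ⋀{ξ ∈ L⁰₊ : |f(x)| ≤ ξ‖x‖ for all x ∈ E}`, the random norm of `E*`. -/
def IsDualNorm (f : E → L0 P) (nf : L0 P) : Prop :=
  (∀ ξ : L0 P, ((∀ᵐ ω ∂P, 0 ≤ ξ ω) ∧ ∀ x, ∀ᵐ ω ∂P, |f x ω| ≤ ξ ω * N.nm x ω) →
    ∀ᵐ ω ∂P, nf ω ≤ ξ ω) ∧
  (∀ c : L0 P,
    (∀ ξ : L0 P, ((∀ᵐ ω ∂P, 0 ≤ ξ ω) ∧ ∀ x, ∀ᵐ ω ∂P, |f x ω| ≤ ξ ω * N.nm x ω) →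
      ∀ᵐ ω ∂P, c ω ≤ ξ ω) → ∀ᵐ ω ∂P, c ω ≤ nf ω)

/-- The cone `K(f,k) = {y ∈ E : k‖y‖ ≤ f(y)}`. -/
def Kcone (f : E → L0 P) (k : L0 P) : Set E := {y | ∀ᵐ ω ∂P, k ω * N.nm y ω ≤ f y ω}

/-- `f ∈ E*∖{0}`, bounded from above on `G`, supports `G` at some point:
`f(x) = ⋁f(G)` for some `x ∈ G`. -/
def Supports (G : Set E) (f : E → L0 P) : Prop :=
  N.IsDual f ∧ f ≠ 0 ∧ (∃ ξ : L0 P, ∀ x ∈ G, ∀ᵐ ω ∂P, f x ω ≤ ξ ω) ∧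
    ∃ x ∈ G, IsSupOnR f G (f x)

/-- The set of support points of `G`: points `x ∈ G` at which some
`f ∈ E*∖{0}`, bounded from above on `G`, attains `f(x) = ⋁f(G)`. -/
def SupportPoints (G : Set E) : Set E :=
  {x | x ∈ G ∧ ∃ f : E → L0 P, N.IsDual f ∧ f ≠ 0 ∧
    (∃ ξ : L0 P, ∀ y ∈ G, ∀ᵐ ω ∂P, f y ω ≤ ξ ω) ∧ IsSupOnR f G (f x)}

end RNModule


section Aux

variable {Ω : Type*} [MeasurableSpace Ω] {P : Measure Ω}

/-- The constant function as an element of `L0`. -/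
noncomputable def cstL (P : Measure Ω) (t : ℝ) : L0 P := AEEqFun.const Ω t

lemma cstL_coe (t : ℝ) : ∀ᵐ ω ∂P, cstL P t ω = t := AEEqFun.coeFn_const Ω t

lemma L0.ext' {ξ η : L0 P} (h : ∀ᵐ ω ∂P, ξ ω = η ω) : ξ = η := AEEqFun.ext h

lemma coe_add (ξ η : L0 P) : ∀ᵐ ω ∂P, (ξ + η) ω = ξ ω + η ω := by
  filter_upwards [AEEqFun.coeFn_add ξ η] with ω h; simp [h]

lemma coe_sub (ξ η : L0 P) : ∀ᵐ ω ∂P, (ξ - η) ω = ξ ω - η ω := by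
  filter_upwards [AEEqFun.coeFn_sub ξ η] with ω h; simp [h]

lemma coe_mul (ξ η : L0 P) : ∀ᵐ ω ∂P, (ξ * η) ω = ξ ω * η ω := by
  filter_upwards [AEEqFun.coeFn_mul ξ η] with ω h; simp [h]

lemma coe_neg (ξ : L0 P) : ∀ᵐ ω ∂P, (-ξ) ω = -(ξ ω) := by
  filter_upwards [AEEqFun.coeFn_neg ξ] with ω h; simp [h]

lemma coe_zero : ∀ᵐ ω ∂P, (0 : L0 P) ω = 0 := AEEqFun.coeFn_zero

lemma coe_one : ∀ᵐ ω ∂P, (1 : L0 P) ω = 1 := AEEqFun.coeFn_one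

lemma cstL_add (s t : ℝ) : cstL P (s + t) = cstL P s + cstL P t := by
  apply L0.ext'
  filter_upwards [cstL_coe (P := P) (s+t), cstL_coe (P := P) s, cstL_coe (P := P) t,
    coe_add (cstL P s) (cstL P t)] with ω h1 h2 h3 h4
  rw [h1, h4, h2, h3]

lemma cstL_sub (s t : ℝ) : cstL P (s - t) = cstL P s - cstL P t := by
  apply L0.ext'
  filter_upwards [cstL_coe (P := P) (s-t), cstL_coe (P := P) s, cstL_coe (P := P) t,
    coe_sub (cstL P s) (cstL P t)] with ω h1 h2 h3 h4
  rw [h1, h4, h2, h3]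

lemma cstL_mul (s t : ℝ) : cstL P (s * t) = cstL P s * cstL P t := by
  apply L0.ext'
  filter_upwards [cstL_coe (P := P) (s*t), cstL_coe (P := P) s, cstL_coe (P := P) t,
    coe_mul (cstL P s) (cstL P t)] with ω h1 h2 h3 h4
  rw [h1, h4, h2, h3]

lemma cstL_one : cstL P 1 = 1 := by
  apply L0.ext'
  filter_upwards [cstL_coe (P := P) 1, coe_one (P := P)] with ω h1 h2; rw [h1, h2]

lemma cstL_zero : cstL P 0 = 0 := by
  apply L0.ext'
  filter_upwards [cstL_coe (P := P) 0, coe_zero (P := P)] with ω h1 h2; rw [h1, h2]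

lemma cstL_neg (t : ℝ) : cstL P (-t) = - cstL P t := by
  have h := cstL_add (P := P) t (-t)
  rw [add_neg_cancel, cstL_zero] at h
  exact (neg_eq_of_add_eq_zero_right h.symm).symm

lemma Lmul_add (ξ η ζ : L0 P) : ξ * (η + ζ) = ξ * η + ξ * ζ := by
  apply L0.ext'
  filter_upwards [coe_mul ξ (η + ζ), coe_add η ζ, coe_add (ξ * η) (ξ * ζ),
    coe_mul ξ η, coe_mul ξ ζ] with ω h1 h2 h3 h4 h5
  rw [h1, h2, h3, h4, h5, mul_add]

lemma Lsub_mul (ξ η ζ : L0 P) : (ξ - η) * ζ = ξ * ζ - η * ζ := by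
  apply L0.ext'
  filter_upwards [coe_mul (ξ - η) ζ, coe_sub ξ η, coe_sub (ξ * ζ) (η * ζ),
    coe_mul ξ ζ, coe_mul η ζ] with ω h1 h2 h3 h4 h5
  rw [h1, h2, h3, h4, h5, sub_mul]

lemma Lzero_mul (ξ : L0 P) : (0 : L0 P) * ξ = 0 := by
  apply L0.ext'
  filter_upwards [coe_mul 0 ξ, coe_zero (P := P)] with ω h1 h2
  rw [h1, h2, zero_mul]

lemma Lmul_zero (ξ : L0 P) : ξ * (0 : L0 P) = 0 := by
  apply L0.ext'
  filter_upwards [coe_mul ξ 0, coe_zero (P := P)] with ω h1 h2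
  rw [h1, h2, mul_zero]

lemma Lneg_one_mul (ξ : L0 P) : (-1 : L0 P) * ξ = -ξ := by
  apply L0.ext'
  filter_upwards [coe_mul (-1) ξ, coe_neg (1 : L0 P), coe_one (P := P),
    coe_neg ξ] with ω h1 h2 h3 h4
  rw [h1, h2, h3, h4, neg_one_mul]

lemma Lmul_sub (ξ η ζ : L0 P) : ξ * (η - ζ) = ξ * η - ξ * ζ := by
  apply L0.ext'
  filter_upwards [coe_mul ξ (η - ζ), coe_sub η ζ, coe_sub (ξ * η) (ξ * ζ),
    coe_mul ξ η, coe_mul ξ ζ] with ω h1 h2 h3 h4 h5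
  rw [h1, h2, h3, h4, h5, mul_sub]

variable {E : Type*} [AddCommGroup E]

namespace RNModule

variable (N : RNModule P E)

lemma smul_zero' (ξ : L0 P) : N.smul ξ 0 = 0 := by
  have h := N.smul_add ξ 0 0
  rw [add_zero] at h
  exact right_eq_add.mp h

lemma zero_smul' (x : E) : N.smul 0 x = 0 := by
  have h := N.add_smul 0 0 x
  rw [add_zero] at h
  exact right_eq_add.mp h

lemma neg_smul' (ξ : L0 P) (x : E) : N.smul (-ξ) x = -(N.smul ξ x) := by
  have h := N.add_smul ξ (-ξ) x
  rw [add_neg_cancel, N.zero_smul'] at h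
  exact (neg_eq_of_add_eq_zero_right h.symm).symm

lemma smul_neg' (ξ : L0 P) (x : E) : N.smul ξ (-x) = -(N.smul ξ x) := by
  have h := N.smul_add ξ x (-x)
  rw [add_neg_cancel, N.smul_zero'] at h
  exact (neg_eq_of_add_eq_zero_right h.symm).symm

lemma smul_sub' (ξ : L0 P) (x y : E) : N.smul ξ (x - y) = N.smul ξ x - N.smul ξ y := by
  rw [sub_eq_add_neg, N.smul_add, N.smul_neg', sub_eq_add_neg]

/-- Scalar multiplication by a real constant. -/
noncomputable def rsm (t : ℝ) (x : E) : E := N.smul (cstL P t) x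

lemma rsm_one (x : E) : N.rsm 1 x = x := by rw [rsm, cstL_one, N.one_smul]

lemma rsm_zero (x : E) : N.rsm 0 x = 0 := by rw [rsm, cstL_zero, N.zero_smul']

lemma rsm_zero' (t : ℝ) : N.rsm t (0 : E) = 0 := N.smul_zero' _

lemma rsm_neg_one (x : E) : N.rsm (-1) x = -x := by
  have : ((-1 : ℝ)) = -(1:ℝ) := by norm_num
  rw [rsm, this, cstL_neg, cstL_one, N.neg_smul', N.one_smul]

lemma rsm_add (s t : ℝ) (x : E) : N.rsm (s + t) x = N.rsm s x + N.rsm t x := by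
  rw [rsm, cstL_add, N.add_smul]; rfl

lemma rsm_sub (s t : ℝ) (x : E) : N.rsm (s - t) x = N.rsm s x - N.rsm t x := by
  rw [rsm, cstL_sub, sub_eq_add_neg, N.add_smul, N.neg_smul']; rw [sub_eq_add_neg]; rfl

lemma rsm_mul (s t : ℝ) (x : E) : N.rsm (s * t) x = N.rsm s (N.rsm t x) := by
  rw [rsm, cstL_mul, N.mul_smul]; rfl

lemma rsm_add_x (t : ℝ) (x y : E) : N.rsm t (x + y) = N.rsm t x + N.rsm t y := N.smul_add _ _ _

lemma rsm_sub_x (t : ℝ) (x y : E) : N.rsm t (x - y) = N.rsm t x - N.rsm t y := N.smul_sub' _ _ _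

lemma rsm_smul (t : ℝ) (ξ : L0 P) (x : E) :
    N.rsm t (N.smul ξ x) = N.smul ξ (N.rsm t x) := by
  rw [rsm, ← N.mul_smul, mul_comm, N.mul_smul]; rfl

lemma rsm_neg (t : ℝ) (x : E) : N.rsm (-t) x = -(N.rsm t x) := by
  rw [rsm, cstL_neg, N.neg_smul']; rfl

lemma nm_zero : N.nm (0 : E) = 0 := (N.nm_eq_zero_iff 0).mpr rfl

lemma nm_zero_ae : ∀ᵐ ω ∂P, N.nm (0 : E) ω = 0 := by
  rw [N.nm_zero]; exact coe_zero

lemma nm_rsm (t : ℝ) (x : E) : ∀ᵐ ω ∂P, N.nm (N.rsm t x) ω = |t| * N.nm x ω := by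
  filter_upwards [N.nm_smul (cstL P t) x, cstL_coe (P := P) t] with ω h1 h2
  rw [rsm] at *; rw [h1, h2]

lemma nm_neg_ae (x : E) : ∀ᵐ ω ∂P, N.nm (-x) ω = N.nm x ω := by
  have := N.nm_rsm (-1) x
  rw [N.rsm_neg_one] at this
  filter_upwards [this] with ω h; rw [h]; simp

end RNModule

namespace RNModule

variable (N : RNModule P E)

section DualLemmas

variable {f : E → L0 P}

lemma dual_zero (hf : N.IsDual f) : f 0 = 0 := by
  have h := hf.1 0 0
  rw [add_zero] at h
  exact right_eq_add.mp h

lemma dual_neg (hf : N.IsDual f) (x : E) : f (-x) = -(f x) := by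
  have h := hf.1 x (-x)
  rw [add_neg_cancel, N.dual_zero hf] at h
  exact (neg_eq_of_add_eq_zero_right h.symm).symm

lemma dual_sub (hf : N.IsDual f) (x y : E) : f (x - y) = f x - f y := by
  rw [sub_eq_add_neg, hf.1, N.dual_neg hf, sub_eq_add_neg]

lemma dual_rsm (hf : N.IsDual f) (t : ℝ) (x : E) : f (N.rsm t x) = cstL P t * f x := hf.2.1 _ _

lemma dual_rsm_coe (hf : N.IsDual f) (t : ℝ) (x : E) : ∀ᵐ ω ∂P, f (N.rsm t x) ω = t * f x ω := by
  rw [N.dual_rsm hf]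
  filter_upwards [coe_mul (cstL P t) (f x), cstL_coe (P := P) t] with ω h1 h2
  rw [h1, h2]

end DualLemmas

end RNModule

section IndLemmas

lemma indL0_coe {A : Set Ω} (hA : MeasurableSet A) :
    ∀ᵐ ω ∂P, indL0 P A hA ω = A.indicator (fun _ => (1:ℝ)) ω :=
  AEEqFun.coeFn_mk _ _

lemma indL0_nonneg {A : Set Ω} (hA : MeasurableSet A) : ∀ᵐ ω ∂P, 0 ≤ indL0 P A hA ω := by
  filter_upwards [indL0_coe (P := P) hA] with ω h
  rw [h]; by_cases hω : ω ∈ A <;> simp [Set.indicator_apply, hω]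

lemma indL0_add_compl {A : Set Ω} (hA : MeasurableSet A) :
    indL0 P A hA + indL0 P Aᶜ hA.compl = 1 := by
  apply L0.ext'
  filter_upwards [indL0_coe (P := P) hA, indL0_coe (P := P) hA.compl,
    coe_add (indL0 P A hA) (indL0 P Aᶜ hA.compl), coe_one (P := P)] with ω h1 h2 h3 h4
  rw [h3, h1, h2, h4]
  by_cases hω : ω ∈ A <;> simp [Set.indicator_apply, hω]

end IndLemmas

section Lub

variable [IsProbabilityMeasure P]

lemma integrable_arctan_comp {u : Ω → ℝ} (hu : AEStronglyMeasurable u P) :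
    Integrable (fun ω => Real.arctan (u ω)) P := by
  refine Integrable.mono' (integrable_const (Real.pi / 2))
    (Real.continuous_arctan.comp_aestronglyMeasurable hu) ?_
  filter_upwards with ω
  rw [Real.norm_eq_abs, abs_le]
  exact ⟨(Real.neg_pi_div_two_lt_arctan _).le, (Real.arctan_lt_pi_div_two _).le⟩

/-- `J ξ = ∫ arctan ξ dP`, a strictly monotone "utility". -/
noncomputable def Jfun (P : Measure Ω) (ξ : L0 P) : ℝ := ∫ ω, Real.arctan (ξ ω) ∂P

lemma Jfun_mono {ξ η : L0 P} (h : ξ ≤ η) : Jfun P ξ ≤ Jfun P η := by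
  apply integral_mono_ae (integrable_arctan_comp ξ.aestronglyMeasurable)
    (integrable_arctan_comp η.aestronglyMeasurable)
  filter_upwards [AEEqFun.coeFn_le.mpr h] with ω h
  exact Real.arctan_strictMono.monotone h

/-- Conditional completeness of `L⁰`: every nonempty family bounded above has a least
upper bound (essential supremum). -/
lemma exists_lub (S : Set (L0 P)) (hS : S.Nonempty) (b : L0 P)
    (hb : ∀ ξ ∈ S, ∀ᵐ ω ∂P, ξ ω ≤ b ω) :
    ∃ η : L0 P, (∀ ξ ∈ S, ∀ᵐ ω ∂P, ξ ω ≤ η ω) ∧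
      ∀ c : L0 P, (∀ ξ ∈ S, ∀ᵐ ω ∂P, ξ ω ≤ c ω) → ∀ᵐ ω ∂P, η ω ≤ c ω := by
  classical
  -- the sup-closure of S
  set T : Set (L0 P) := {ξ | ∃ F : Finset (L0 P), ∃ hF : F.Nonempty, ↑F ⊆ S ∧ ξ = F.sup' hF id}
    with hT
  have hST : S ⊆ T := by
    intro ξ hξ
    exact ⟨{ξ}, Finset.singleton_nonempty ξ, by simpa using hξ, by simp⟩
  have hTsup : ∀ ξ ∈ T, ∀ η ∈ T, ξ ⊔ η ∈ T := by
    rintro ξ ⟨F₁, h₁, hF₁, rfl⟩ η ⟨F₂, h₂, hF₂, rfl⟩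
    refine ⟨F₁ ∪ F₂, h₁.mono Finset.subset_union_left, ?_, ?_⟩
    · intro z hz
      rcases Finset.mem_union.mp hz with h | h
      exacts [hF₁ h, hF₂ h]
    · rw [Finset.sup'_union h₁ h₂ id]
  have hTle : ∀ ξ ∈ T, ∀ c : L0 P, (∀ s ∈ S, s ≤ c) → ξ ≤ c := by
    rintro ξ ⟨F, hF, hFS, rfl⟩ c hc
    exact Finset.sup'_le hF id fun z hz => hc z (hFS hz)
  have hbub : ∀ s ∈ S, s ≤ b := fun s hs => AEEqFun.coeFn_le.mp (hb s hs)
  have hTb : ∀ ξ ∈ T, ξ ≤ b := fun ξ hξ => hTle ξ hξ b hbub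
  -- the target value
  have hJTne : (Jfun P '' T).Nonempty := ⟨Jfun P hS.choose, hS.choose, hST hS.choose_spec, rfl⟩
  have hJTbdd : BddAbove (Jfun P '' T) := by
    refine ⟨Jfun P b, ?_⟩
    rintro j ⟨ξ, hξ, rfl⟩
    exact Jfun_mono (hTb ξ hξ)
  set m : ℝ := sSup (Jfun P '' T) with hm
  -- a maximizing sequence
  have hseq : ∀ n : ℕ, ∃ ξ ∈ T, m - 1 / (n + 1) < Jfun P ξ := by
    intro n
    have hlt : m - 1 / ((n : ℝ) + 1) < m := by
      have : (0:ℝ) < 1 / ((n : ℝ) + 1) := by positivity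
      linarith
    obtain ⟨j, hj, hjlt⟩ := exists_lt_of_lt_csSup hJTne hlt
    obtain ⟨ξ, hξ, rfl⟩ := hj
    exact ⟨ξ, hξ, hjlt⟩
  choose ζ' hζ'T hζ'J using hseq
  -- running suprema
  set ζ : ℕ → L0 P := fun n => Nat.rec (ζ' 0) (fun n ih => ih ⊔ ζ' (n + 1)) n with hζ
  have hζT : ∀ n, ζ n ∈ T := by
    intro n; induction n with
    | zero => exact hζ'T 0
    | succ n ih => exact hTsup _ ih _ (hζ'T (n+1))
  have hζ'le : ∀ n, ζ' n ≤ ζ n := by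
    intro n; cases n with
    | zero => exact le_rfl
    | succ n => exact le_sup_right
  have hζmono : Monotone ζ := monotone_nat_of_le_succ fun n => le_sup_left
  have hζm : ∀ n, Jfun P (ζ n) ≤ m :=
    fun n => le_csSup hJTbdd ⟨ζ n, hζT n, rfl⟩
  have hζlb : ∀ n, m - 1 / (n + 1) < Jfun P (ζ n) :=
    fun n => lt_of_lt_of_le (hζ'J n) (Jfun_mono (hζ'le n))
  -- measurable representatives
  have hrep : ∀ n, ∃ g : Ω → ℝ, Measurable g ∧ (⇑(ζ n) : Ω → ℝ) =ᵐ[P] g := by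
    intro n
    obtain h := (ζ n).aestronglyMeasurable.aemeasurable
    exact ⟨h.mk _, h.measurable_mk, h.ae_eq_mk⟩
  choose g hgm hge using hrep
  obtain hbm := b.aestronglyMeasurable.aemeasurable
  set bm : Ω → ℝ := hbm.mk _ with hbmdef
  have hbme : (⇑b : Ω → ℝ) =ᵐ[P] bm := hbm.ae_eq_mk
  have hbmm : Measurable bm := hbm.measurable_mk
  -- everywhere-monotone truncated running maxima
  set Mx : ℕ → Ω → ℝ := fun n => Nat.rec (g 0) (fun n ih ω => max (ih ω) (g (n + 1) ω)) n
    with hMx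
  have hMxm : ∀ n, Measurable (Mx n) := by
    intro n; induction n with
    | zero => exact hgm 0
    | succ n ih => exact Measurable.max ih (hgm (n+1))
  set q : ℕ → Ω → ℝ := fun n ω => min (Mx n ω) (bm ω) with hq
  have hqm : ∀ n, Measurable (q n) := fun n => (hMxm n).min hbmm
  have hqmono : ∀ ω, Monotone fun n => q n ω := by
    intro ω
    apply monotone_nat_of_le_succ
    intro n
    exact min_le_min (le_max_left _ _) le_rfl
  have hqb : ∀ n ω, q n ω ≤ bm ω := fun n ω => min_le_right _ _
  set η₀ : Ω → ℝ := fun ω => ⨆ n, q n ω with hη₀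
  have hη₀m : Measurable η₀ := Measurable.iSup hqm
  have hqtend : ∀ ω, Filter.Tendsto (fun n => q n ω) Filter.atTop (nhds (η₀ ω)) := by
    intro ω
    exact tendsto_atTop_ciSup (hqmono ω) ⟨bm ω, by rintro x ⟨n, rfl⟩; exact hqb n ω⟩
  have hqle : ∀ n ω, q n ω ≤ η₀ ω := by
    intro n ω
    exact le_ciSup ⟨bm ω, by rintro x ⟨j, rfl⟩; exact hqb j ω⟩ n
  set η : L0 P := AEEqFun.mk η₀ hη₀m.aestronglyMeasurable with hηdef
  have hηe : (⇑η : Ω → ℝ) =ᵐ[P] η₀ := AEEqFun.coeFn_mk _ _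
  -- the good a.e. set
  have hgood : ∀ᵐ ω ∂P, (∀ n, ζ n ω = g n ω) ∧ b ω = bm ω ∧ (∀ n, ζ n ω ≤ b ω) ∧
      (∀ n, ζ n ω ≤ ζ (n+1) ω) := by
    refine ((ae_all_iff.mpr hge).and (hbme.and ((ae_all_iff.mpr ?_).and (ae_all_iff.mpr ?_))))
    · intro n; exact AEEqFun.coeFn_le.mpr (hTb _ (hζT n))
    · intro n; exact AEEqFun.coeFn_le.mpr (hζmono (Nat.le_succ n))
  have hqζ : ∀ᵐ ω ∂P, ∀ n, q n ω = ζ n ω := by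
    filter_upwards [hgood] with ω ⟨h1, h2, h3, h4⟩
    have hMxζ : ∀ n, Mx n ω = ζ n ω := by
      intro n; induction n with
      | zero => exact (h1 0).symm
      | succ n ih =>
        show max (Mx n ω) (g (n+1) ω) = ζ (n+1) ω
        rw [ih, ← h1 (n+1)]
        exact max_eq_right (h4 n)
    intro n
    show min (Mx n ω) (bm ω) = ζ n ω
    rw [hMxζ n, ← h2]
    exact min_eq_left (h3 n)
  -- J(ζ n) converges to ∫ arctan η₀ and to m
  have hJq : ∀ n, Jfun P (ζ n) = ∫ ω, Real.arctan (q n ω) ∂P := by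
    intro n
    apply integral_congr_ae
    filter_upwards [hqζ] with ω h
    rw [h n]
  have hdom : Filter.Tendsto (fun n => ∫ ω, Real.arctan (q n ω) ∂P) Filter.atTop
      (nhds (∫ ω, Real.arctan (η₀ ω) ∂P)) := by
    apply MeasureTheory.tendsto_integral_of_dominated_convergence (fun _ => Real.pi / 2)
    · exact fun n => (Real.continuous_arctan.measurable.comp (hqm n)).aestronglyMeasurable
    · exact integrable_const _
    · intro n
      filter_upwards with ω
      rw [Real.norm_eq_abs, abs_le]
      exact ⟨(Real.neg_pi_div_two_lt_arctan _).le, (Real.arctan_lt_pi_div_two _).le⟩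
    · filter_upwards with ω
      exact (Real.continuous_arctan.tendsto _).comp (hqtend ω)
  have hJm : Filter.Tendsto (fun n => Jfun P (ζ n)) Filter.atTop (nhds m) := by
    have hlow : Filter.Tendsto (fun n : ℕ => m - 1 / ((n:ℝ) + 1)) Filter.atTop (nhds m) := by
      have := tendsto_one_div_add_atTop_nhds_zero_nat (𝕜 := ℝ)
      have h2 := Filter.Tendsto.sub (tendsto_const_nhds (x := m)) this
      simpa using h2
    refine tendsto_of_tendsto_of_tendsto_of_le_of_le hlow tendsto_const_nhds
      (fun n => (hζlb n).le) (fun n => hζm n)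
  have hmint : m = ∫ ω, Real.arctan (η₀ ω) ∂P := by
    have : Filter.Tendsto (fun n => Jfun P (ζ n)) Filter.atTop
        (nhds (∫ ω, Real.arctan (η₀ ω) ∂P)) := by
      simpa only [hJq] using hdom
    exact tendsto_nhds_unique hJm this
  refine ⟨η, ?_, ?_⟩
  · -- η is an upper bound of S
    intro ξ hξ
    have hξT : ∀ n, ξ ⊔ ζ n ∈ T := fun n => hTsup ξ (hST hξ) (ζ n) (hζT n)
    have hJsup : ∀ n, Jfun P (ξ ⊔ ζ n) ≤ m := fun n => le_csSup hJTbdd ⟨_, hξT n, rfl⟩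
    have hJsup_eq : ∀ n, Jfun P (ξ ⊔ ζ n) = ∫ ω, Real.arctan (max (ξ ω) (q n ω)) ∂P := by
      intro n
      apply integral_congr_ae
      filter_upwards [hqζ, AEEqFun.coeFn_sup ξ (ζ n)] with ω h1 h2
      rw [h2, ← h1 n]
    have hmax_meas : AEStronglyMeasurable (fun ω => max (ξ ω) (η₀ ω)) P :=
      (ξ.aestronglyMeasurable.aemeasurable.max hη₀m.aemeasurable).aestronglyMeasurable
    have hdom2 : Filter.Tendsto (fun n => ∫ ω, Real.arctan (max (ξ ω) (q n ω)) ∂P)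
        Filter.atTop (nhds (∫ ω, Real.arctan (max (ξ ω) (η₀ ω)) ∂P)) := by
      apply MeasureTheory.tendsto_integral_of_dominated_convergence (fun _ => Real.pi / 2)
      · intro n
        exact Real.continuous_arctan.comp_aestronglyMeasurable
          ((ξ.aestronglyMeasurable.aemeasurable.max (hqm n).aemeasurable).aestronglyMeasurable)
      · exact integrable_const _
      · intro n
        filter_upwards with ω
        rw [Real.norm_eq_abs, abs_le]
        exact ⟨(Real.neg_pi_div_two_lt_arctan _).le, (Real.arctan_lt_pi_div_two _).le⟩
      · filter_upwards with ω
        exact (Real.continuous_arctan.tendsto _).comp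
          ((Filter.Tendsto.max tendsto_const_nhds (hqtend ω)))
    have hle2 : ∫ ω, Real.arctan (max (ξ ω) (η₀ ω)) ∂P ≤ m := by
      apply le_of_tendsto_of_tendsto' hdom2 tendsto_const_nhds
      intro n
      rw [← hJsup_eq n]
      exact hJsup n
    -- the nonnegative difference has nonpositive integral
    set D : Ω → ℝ := fun ω => Real.arctan (max (ξ ω) (η₀ ω)) - Real.arctan (η₀ ω) with hD
    have hDnonneg : 0 ≤ᵐ[P] D := by
      filter_upwards with ω
      have := Real.arctan_strictMono.monotone (le_max_right (ξ ω) (η₀ ω))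
      simpa [hD] using this
    have hDint : Integrable D P :=
      (integrable_arctan_comp hmax_meas).sub
        (integrable_arctan_comp hη₀m.aestronglyMeasurable)
    have hDzero : ∫ ω, D ω ∂P = 0 := by
      have h1 : ∫ ω, D ω ∂P ≤ 0 := by
        rw [hD]
        rw [integral_sub (integrable_arctan_comp hmax_meas)
          (integrable_arctan_comp hη₀m.aestronglyMeasurable)]
        linarith [hle2, hmint.le, hmint.ge]
      have h2 : 0 ≤ ∫ ω, D ω ∂P := integral_nonneg_of_ae hDnonneg
      linarith
    have hDae : D =ᵐ[P] 0 := (integral_eq_zero_iff_of_nonneg_ae hDnonneg hDint).mp hDzero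
    filter_upwards [hDae, hηe] with ω h1 h2
    have : Real.arctan (max (ξ ω) (η₀ ω)) = Real.arctan (η₀ ω) := by
      have : D ω = 0 := h1
      rw [hD] at this; dsimp at this; linarith
    have hmax : max (ξ ω) (η₀ ω) = η₀ ω := Real.arctan_injective this
    rw [h2]
    exact le_of_max_le_left hmax.le
  · -- η is the least upper bound
    intro c hc
    have hcub : ∀ s ∈ S, s ≤ c := fun s hs => AEEqFun.coeFn_le.mp (hc s hs)
    have hζc : ∀ n, ∀ᵐ ω ∂P, ζ n ω ≤ c ω :=
      fun n => AEEqFun.coeFn_le.mpr (hTle _ (hζT n) c hcub)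
    filter_upwards [hqζ, ae_all_iff.mpr hζc, hηe] with ω h1 h2 h3
    rw [h3]
    exact ciSup_le fun n => (h1 n).symm ▸ ((h1 n) ▸ h2 n)
end Lub

section Glb

variable [IsProbabilityMeasure P]

lemma exists_glb (S : Set (L0 P)) (hS : S.Nonempty) (b : L0 P)
    (hb : ∀ ξ ∈ S, ∀ᵐ ω ∂P, b ω ≤ ξ ω) :
    ∃ η : L0 P, (∀ ξ ∈ S, ∀ᵐ ω ∂P, η ω ≤ ξ ω) ∧
      ∀ c : L0 P, (∀ ξ ∈ S, ∀ᵐ ω ∂P, c ω ≤ ξ ω) → ∀ᵐ ω ∂P, c ω ≤ η ω := by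
  have hb' : ∀ ζ ∈ (fun ξ : L0 P => -ξ) '' S, ∀ᵐ ω ∂P, ζ ω ≤ (-b) ω := by
    rintro ζ ⟨ξ, hξ, rfl⟩
    filter_upwards [hb ξ hξ, coe_neg ξ, coe_neg b] with ω h hξω hbω
    rw [hξω, hbω]; linarith
  obtain ⟨η', h1, h2⟩ := exists_lub (S := (fun ξ : L0 P => -ξ) '' S) (⟨-hS.choose, hS.choose,
    hS.choose_spec, rfl⟩) (-b) hb'
  refine ⟨-η', ?_, ?_⟩
  · intro ξ hξ
    have := h1 (-ξ) ⟨ξ, hξ, rfl⟩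
    filter_upwards [this, coe_neg η', coe_neg ξ] with ω hω hη hξω
    rw [hη]; rw [hξω] at hω; linarith
  · intro c hc
    have : ∀ ζ ∈ (fun ξ : L0 P => -ξ) '' S, ∀ᵐ ω ∂P, ζ ω ≤ (-c) ω := by
      rintro ζ ⟨ξ, hξ, rfl⟩
      filter_upwards [hc ξ hξ, coe_neg ξ, coe_neg c] with ω h hξω hcω
      rw [hξω, hcω]; linarith
    filter_upwards [h2 (-c) this, coe_neg η', coe_neg c] with ω h hη hcω
    rw [hη]; rw [hcω] at h; linarith

end Glb

namespace RNModule

/-- The domination predicate used in the Hahn–Banach construction: `(y, r)` is dominated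
by the sublinear envelope of `x ↦ k‖·‖` and `f` on the cone generated by `G - x₀`. -/
def Dom [IsProbabilityMeasure P] (N : RNModule P E) (k : L0 P) (f : E → L0 P) (G : Set E)
    (x₀ : E) (y : E) (r : L0 P) : Prop :=
  ∀ t : ℝ, 0 ≤ t → ∀ x ∈ G, ∀ᵐ ω ∂P,
    r ω ≤ k ω * N.nm (y + N.rsm t (x - x₀)) ω - t * f (x - x₀) ω

end RNModule

section HB

variable [IsProbabilityMeasure P]

set_option maxHeartbeats 1000000 in
/-- Hahn–Banach in the RN module: an `L⁰`-valued real-linear functional dominated by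
`k‖·‖` and minorized by `f` on `G - x₀`. -/
lemma exists_hb (N : RNModule P E) (k : L0 P) (hk : ∀ᵐ ω ∂P, 0 ≤ k ω)
    (f : E → L0 P) (hf : N.IsDual f) (G : Set E) (hGconv : N.L0Convex G)
    (x₀ : E) (hx₀G : x₀ ∈ G)
    (hKey : ∀ x ∈ G, ∀ᵐ ω ∂P, f (x - x₀) ω ≤ k ω * N.nm (x - x₀) ω) :
    ∃ h : E → L0 P, (∀ x y, h (x + y) = h x + h y) ∧
      (∀ t x, h (N.rsm t x) = cstL P t * h x) ∧
      (∀ y, ∀ᵐ ω ∂P, h y ω ≤ k ω * N.nm y ω) ∧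
      (∀ x ∈ G, ∀ᵐ ω ∂P, f (x - x₀) ω ≤ h (x - x₀) ω) := by
  classical
  -- the collection of dominated partial "graphs"
  set D : Set (Set (E × L0 P)) := {Γ | ((0 : E), (0 : L0 P)) ∈ Γ ∧
    (∀ p ∈ Γ, ∀ q ∈ Γ, p - q ∈ Γ) ∧
    (∀ t : ℝ, ∀ p ∈ Γ, ((N.rsm t p.1, cstL P t * p.2) : E × L0 P) ∈ Γ) ∧
    (∀ p ∈ Γ, N.Dom k f G x₀ p.1 p.2)} with hD
  have hdom00 : N.Dom k f G x₀ (0 : E) (0 : L0 P) := by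
    intro t ht x hx
    simp only [zero_add]
    filter_upwards [hKey x hx, N.nm_rsm t (x - x₀), coe_zero (P := P), hk,
      N.nm_nonneg (x - x₀)] with ω h1 h2 h3 h4 h5
    rw [h3, h2, abs_of_nonneg ht]
    nlinarith [mul_le_mul_of_nonneg_left h1 ht]
  have h0D : ({((0 : E), (0 : L0 P))} : Set (E × L0 P)) ∈ D := by
    refine ⟨rfl, ?_, ?_, ?_⟩
    · rintro p rfl q rfl; simp; rfl
    · rintro t p rfl
      simp only [Set.mem_singleton_iff, Prod.mk.injEq]
      refine ⟨N.smul_zero' _, ?_⟩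
      apply L0.ext'
      filter_upwards [coe_mul (cstL P t) 0, coe_zero (P := P)] with ω h1 h2
      rw [h1, h2, mul_zero]
    · rintro p rfl; exact hdom00
  -- Zorn's lemma
  have hchainub : ∀ c ⊆ D, IsChain (· ⊆ ·) c → c.Nonempty → ∃ ub ∈ D, ∀ s ∈ c, s ⊆ ub := by
    intro c hcD hchain hcne
    refine ⟨⋃₀ c, ⟨?_, ?_, ?_, ?_⟩, fun s hs => Set.subset_sUnion_of_mem hs⟩
    · obtain ⟨s, hs⟩ := hcne
      exact ⟨s, hs, (hcD hs).1⟩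
    · rintro p ⟨s, hs, hps⟩ q ⟨s', hs', hqs'⟩
      rcases hchain.total hs hs' with h | h
      · exact ⟨s', hs', (hcD hs').2.1 p (h hps) q hqs'⟩
      · exact ⟨s, hs, (hcD hs).2.1 p hps q (h hqs')⟩
    · rintro t p ⟨s, hs, hps⟩
      exact ⟨s, hs, (hcD hs).2.2.1 t p hps⟩
    · rintro p ⟨s, hs, hps⟩
      exact (hcD hs).2.2.2 p hps
  obtain ⟨Γ, hsub0, hΓmax⟩ := zorn_subset_nonempty D hchainub _ h0D
  obtain ⟨hΓ0, hΓsub, hΓsc, hΓdom⟩ := hΓmax.prop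
  have hadd : ∀ p ∈ Γ, ∀ q ∈ Γ, p + q ∈ Γ := by
    intro p hp q hq
    have h1 : ((0 : E), (0 : L0 P)) - q ∈ Γ := hΓsub _ hΓ0 _ hq
    have h2 := hΓsub p hp _ h1
    have : p - (((0 : E), (0 : L0 P)) - q) = p + q := by
      have : ((0 : E), (0 : L0 P)) = (0 : E × L0 P) := rfl
      rw [this, zero_sub, sub_neg_eq_add]
    rwa [this] at h2
  -- totality of the maximal graph
  have htot : ∀ y : E, ∃ r : L0 P, (y, r) ∈ Γ := by
    intro y
    by_contra hy
    push_neg at hy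
    -- the central pairing inequality
    have pairing : ∀ p ∈ Γ, ∀ p' ∈ Γ, ∀ t t' : ℝ, 0 ≤ t → 0 ≤ t' →
        ∀ x ∈ G, ∀ x' ∈ G, ∀ᵐ ω ∂P,
        p.2 ω + p'.2 ω ≤ k ω * N.nm (p.1 - y + N.rsm t (x - x₀)) ω
          + k ω * N.nm (p'.1 + y + N.rsm t' (x' - x₀)) ω
          - t * f (x - x₀) ω - t' * f (x' - x₀) ω := by
      intro p hp p' hp' t t' ht ht' x hx x' hx'
      have hpq : p + p' ∈ Γ := hadd p hp p' hp'
      have hcoe2 : ∀ᵐ ω ∂P, (p + p').2 ω = p.2 ω + p'.2 ω := by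
        have : (p + p').2 = p.2 + p'.2 := rfl
        rw [this]; exact coe_add _ _
      by_cases hs : t + t' = 0
      · have ht0 : t = 0 := by linarith
        have ht'0 : t' = 0 := by linarith
        subst ht0; subst ht'0
        have hdom := hΓdom _ hpq 0 le_rfl x₀ hx₀G
        simp only [N.rsm_zero, add_zero] at hdom ⊢
        have e3 : (p.1 - y) + (p'.1 + y) = p.1 + p'.1 := by abel
        have htri := N.nm_add_le (p.1 - y) (p'.1 + y)
        rw [e3] at htri
        filter_upwards [hdom, htri, hcoe2, hk] with ω h1 h2 h3 h4
        rw [h3] at h1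
        have : (p + p').1 = p.1 + p'.1 := rfl
        rw [this] at h1
        nlinarith [mul_le_mul_of_nonneg_left h2 h4]
      · have hspos : 0 < t + t' := lt_of_le_of_ne (by linarith) (Ne.symm hs)
        set s := t + t' with hsdef
        set a := t / s with ha
        set a' := t' / s with ha'
        have haa' : a + a' = 1 := by rw [ha, ha', ← add_div, hsdef]; exact div_self (ne_of_gt hspos)
        have hxsum : N.smul (cstL P a) x + N.smul (cstL P a') x' ∈ G := by
          apply hGconv x hx x' hx'
          · filter_upwards [cstL_coe (P := P) a] with ω h
            rw [h]; positivity
          · filter_upwards [cstL_coe (P := P) a'] with ω h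
            rw [h]; positivity
          · rw [← cstL_add, haa', cstL_one]
        set x'' := N.smul (cstL P a) x + N.smul (cstL P a') x' with hx''
        have e1 : N.rsm a (x - x₀) + N.rsm a' (x' - x₀) = x'' - x₀ := by
          have hx₀s : N.smul (cstL P a) x₀ + N.smul (cstL P a') x₀ = x₀ := by
            rw [← N.add_smul, ← cstL_add, haa', cstL_one, N.one_smul]
          rw [RNModule.rsm, RNModule.rsm, N.smul_sub', N.smul_sub', hx'']
          have e0 : (N.smul (cstL P a) x - N.smul (cstL P a) x₀)
              + (N.smul (cstL P a') x' - N.smul (cstL P a') x₀)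
              = (N.smul (cstL P a) x + N.smul (cstL P a') x')
                - (N.smul (cstL P a) x₀ + N.smul (cstL P a') x₀) := by abel
          rw [e0, hx₀s]
        have e2 : N.rsm s (x'' - x₀) = N.rsm t (x - x₀) + N.rsm t' (x' - x₀) := by
          rw [← e1, N.rsm_add_x, ← N.rsm_mul, ← N.rsm_mul]
          have h1 : s * a = t := by rw [ha]; field_simp
          have h2 : s * a' = t' := by rw [ha']; field_simp
          rw [h1, h2]
        have e3 : p.1 + p'.1 + N.rsm s (x'' - x₀)
            = (p.1 - y + N.rsm t (x - x₀)) + (p'.1 + y + N.rsm t' (x' - x₀)) := by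
          rw [e2]; abel
        have hdom := hΓdom _ hpq s hspos.le x'' hxsum
        have hfval : ∀ᵐ ω ∂P, s * f (x'' - x₀) ω = t * f (x - x₀) ω + t' * f (x' - x₀) ω := by
          have hfsplit : f (x'' - x₀) = cstL P a * f (x - x₀) + cstL P a' * f (x' - x₀) := by
            have : x'' - x₀ = N.rsm a (x - x₀) + N.rsm a' (x' - x₀) := e1.symm
            rw [this, hf.1, N.dual_rsm hf, N.dual_rsm hf]
          rw [hfsplit]
          filter_upwards [coe_add (cstL P a * f (x - x₀)) (cstL P a' * f (x' - x₀)),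
            coe_mul (cstL P a) (f (x - x₀)), coe_mul (cstL P a') (f (x' - x₀)),
            cstL_coe (P := P) a, cstL_coe (P := P) a'] with ω h1 h2 h3 h4 h5
          rw [h1, h2, h3, h4, h5, ha, ha']
          field_simp
        have htri := N.nm_add_le (p.1 - y + N.rsm t (x - x₀)) (p'.1 + y + N.rsm t' (x' - x₀))
        rw [← e3] at htri
        have e4 : (p + p').1 = p.1 + p'.1 := rfl
        rw [e4] at hdom
        filter_upwards [hdom, htri, hcoe2, hfval, hk] with ω h1 h2 h3 h4 h5
        rw [h3] at h1
        nlinarith [mul_le_mul_of_nonneg_left h2 h5]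
    -- the set of lower candidates for the extension value
    set Low : Set (L0 P) := {ξ | ∃ p ∈ Γ, ∃ t : ℝ, 0 ≤ t ∧ ∃ x ∈ G,
      ξ = p.2 - (k * N.nm (p.1 - y + N.rsm t (x - x₀)) - cstL P t * f (x - x₀))} with hLow
    have coeLow : ∀ (r : L0 P) (z : E) (t : ℝ) (c : E), ∀ᵐ ω ∂P,
        (r - (k * N.nm z - cstL P t * f c)) ω = r ω - (k ω * N.nm z ω - t * f c ω) := by
      intro r z t c
      filter_upwards [coe_sub r (k * N.nm z - cstL P t * f c),
        coe_sub (k * N.nm z) (cstL P t * f c), coe_mul k (N.nm z),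
        coe_mul (cstL P t) (f c), cstL_coe (P := P) t] with ω h1 h2 h3 h4 h5
      rw [h1, h2, h3, h4, h5]
    have hLowne : Low.Nonempty :=
      ⟨_, ⟨((0 : E), (0 : L0 P)), hΓ0, 0, le_rfl, x₀, hx₀G, rfl⟩⟩
    have hLowbd : ∀ ξ ∈ Low, ∀ᵐ ω ∂P, ξ ω ≤ (k * N.nm y) ω := by
      rintro ξ ⟨p, hp, t, ht, x, hx, rfl⟩
      have hpair := pairing p hp ((0 : E), (0 : L0 P)) hΓ0 t 0 ht le_rfl x hx x₀ hx₀G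
      simp only [N.rsm_zero, add_zero] at hpair
      have e5 : (0 : E) + y = y := zero_add y
      rw [e5] at hpair
      filter_upwards [hpair, coeLow p.2 (p.1 - y + N.rsm t (x - x₀)) t (x - x₀),
        coe_zero (P := P), coe_mul k (N.nm y)] with ω h1 h2 h3 h4
      rw [h2, h4]
      rw [h3] at h1
      linarith
    obtain ⟨α, hαub, hαlub⟩ := exists_lub Low hLowne (k * N.nm y) hLowbd
    -- α is below every upper candidate
    have hαupp : ∀ p' ∈ Γ, ∀ t' : ℝ, 0 ≤ t' → ∀ x' ∈ G, ∀ᵐ ω ∂P,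
        α ω ≤ k ω * N.nm (p'.1 + y + N.rsm t' (x' - x₀)) ω - t' * f (x' - x₀) ω - p'.2 ω := by
      intro p' hp' t' ht' x' hx'
      have hub : ∀ ξ ∈ Low, ∀ᵐ ω ∂P,
          ξ ω ≤ (k * N.nm (p'.1 + y + N.rsm t' (x' - x₀)) - cstL P t' * f (x' - x₀) - p'.2) ω := by
        rintro ξ ⟨p, hp, t, ht, x, hx, rfl⟩
        have hpair := pairing p hp p' hp' t t' ht ht' x hx x' hx'
        filter_upwards [hpair, coeLow p.2 (p.1 - y + N.rsm t (x - x₀)) t (x - x₀),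
          coe_sub (k * N.nm (p'.1 + y + N.rsm t' (x' - x₀)) - cstL P t' * f (x' - x₀)) p'.2,
          coe_sub (k * N.nm (p'.1 + y + N.rsm t' (x' - x₀))) (cstL P t' * f (x' - x₀)),
          coe_mul k (N.nm (p'.1 + y + N.rsm t' (x' - x₀))),
          coe_mul (cstL P t') (f (x' - x₀)), cstL_coe (P := P) t'] with ω h1 h2 h3 h4 h5 h6 h7
        rw [h2, h3, h4, h5, h6, h7]
        linarith
      filter_upwards [hαlub _ hub,
        coe_sub (k * N.nm (p'.1 + y + N.rsm t' (x' - x₀)) - cstL P t' * f (x' - x₀)) p'.2,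
        coe_sub (k * N.nm (p'.1 + y + N.rsm t' (x' - x₀))) (cstL P t' * f (x' - x₀)),
        coe_mul k (N.nm (p'.1 + y + N.rsm t' (x' - x₀))),
        coe_mul (cstL P t') (f (x' - x₀)), cstL_coe (P := P) t'] with ω h1 h2 h3 h4 h5 h6
      rw [h2, h3, h4, h5, h6] at h1
      linarith
    -- α is above every lower candidate
    have hαlow : ∀ p ∈ Γ, ∀ t : ℝ, 0 ≤ t → ∀ x ∈ G, ∀ᵐ ω ∂P,
        p.2 ω - (k ω * N.nm (p.1 - y + N.rsm t (x - x₀)) ω - t * f (x - x₀) ω) ≤ α ω := by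
      intro p hp t ht x hx
      have := hαub _ ⟨p, hp, t, ht, x, hx, rfl⟩
      filter_upwards [this, coeLow p.2 (p.1 - y + N.rsm t (x - x₀)) t (x - x₀)] with ω h1 h2
      rw [h2] at h1
      exact h1
    -- the extended graph
    set Γ' : Set (E × L0 P) := {q | ∃ p ∈ Γ, ∃ t : ℝ,
      q = p + ((N.rsm t y, cstL P t * α) : E × L0 P)} with hΓ'
    have hΓΓ' : Γ ⊆ Γ' := by
      intro p hp
      refine ⟨p, hp, 0, ?_⟩
      rw [N.rsm_zero, cstL_zero, Lzero_mul]
      have : ((0 : E), (0 : L0 P)) = (0 : E × L0 P) := rfl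
      rw [this, add_zero]
    have hyα : ((y, α) : E × L0 P) ∈ Γ' := by
      refine ⟨((0 : E), (0 : L0 P)), hΓ0, 1, ?_⟩
      rw [N.rsm_one, cstL_one, one_mul]
      have : ((0 : E), (0 : L0 P)) = (0 : E × L0 P) := rfl
      rw [this, zero_add]
    have hΓ'D : Γ' ∈ D := by
      refine ⟨hΓΓ' hΓ0, ?_, ?_, ?_⟩
      · rintro q₁ ⟨p₁, hp₁, t₁, rfl⟩ q₂ ⟨p₂, hp₂, t₂, rfl⟩
        refine ⟨p₁ - p₂, hΓsub _ hp₁ _ hp₂, t₁ - t₂, ?_⟩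
        apply Prod.ext
        · show (p₁.1 + N.rsm t₁ y) - (p₂.1 + N.rsm t₂ y) = (p₁ - p₂).1 + N.rsm (t₁ - t₂) y
          rw [N.rsm_sub]
          show _ = p₁.1 - p₂.1 + (N.rsm t₁ y - N.rsm t₂ y)
          abel
        · show (p₁.2 + cstL P t₁ * α) - (p₂.2 + cstL P t₂ * α)
              = (p₁ - p₂).2 + cstL P (t₁ - t₂) * α
          rw [cstL_sub, Lsub_mul]
          show _ = p₁.2 - p₂.2 + (cstL P t₁ * α - cstL P t₂ * α)
          abel
      · rintro t q ⟨p, hp, u, rfl⟩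
        refine ⟨(N.rsm t p.1, cstL P t * p.2), hΓsc t p hp, t * u, ?_⟩
        apply Prod.ext
        · show N.rsm t (p.1 + N.rsm u y) = N.rsm t p.1 + N.rsm (t * u) y
          rw [N.rsm_add_x, N.rsm_mul]
        · show cstL P t * (p.2 + cstL P u * α) = cstL P t * p.2 + cstL P (t * u) * α
          rw [Lmul_add, cstL_mul, mul_assoc]
      · rintro q ⟨p, hp, u, rfl⟩
        intro s hs x hx
        show ∀ᵐ ω ∂P, (p.2 + cstL P u * α) ω
          ≤ k ω * N.nm ((p.1 + N.rsm u y) + N.rsm s (x - x₀)) ω - s * f (x - x₀) ω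
        have hcoeq : ∀ᵐ ω ∂P, (p.2 + cstL P u * α) ω = p.2 ω + u * α ω := by
          filter_upwards [coe_add p.2 (cstL P u * α), coe_mul (cstL P u) α,
            cstL_coe (P := P) u] with ω h1 h2 h3
          rw [h1, h2, h3]
        rcases lt_trichotomy u 0 with hu | hu | hu
        · -- u < 0
          set v := -u with hv
          have hvpos : 0 < v := by rw [hv]; linarith
          have hp'' : ((N.rsm (1/v) p.1, cstL P (1/v) * p.2) : E × L0 P) ∈ Γ :=
            hΓsc (1/v) p hp
          have hlow := hαlow _ hp'' (s/v) (by positivity) x hx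
          have eE : N.rsm v ((N.rsm (1/v) p.1, cstL P (1/v) * p.2).1 - y + N.rsm (s/v) (x - x₀))
              = p.1 + N.rsm u y + N.rsm s (x - x₀) := by
            show N.rsm v (N.rsm (1/v) p.1 - y + N.rsm (s/v) (x - x₀)) = _
            rw [N.rsm_add_x, N.rsm_sub_x, ← N.rsm_mul]
            have h1 : v * (1/v) = 1 := by field_simp
            have h2 : v * (s/v) = s := by field_simp
            rw [h1, N.rsm_one]
            show p.1 - N.rsm v y + N.rsm v (N.rsm (s/v) (x - x₀)) = _
            rw [← N.rsm_mul, h2]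
            have h3 : N.rsm u y = -(N.rsm v y) := by
              rw [hv, ← N.rsm_neg]; norm_num
            rw [h3]; abel
          have hnmv := N.nm_rsm v ((N.rsm (1/v) p.1, cstL P (1/v) * p.2).1 - y
            + N.rsm (s/v) (x - x₀))
          rw [eE] at hnmv
          have hcoep'' : ∀ᵐ ω ∂P, (cstL P (1/v) * p.2) ω = (1/v) * p.2 ω := by
            filter_upwards [coe_mul (cstL P (1/v)) p.2, cstL_coe (P := P) (1/v)] with ω h1 h2
            rw [h1, h2]
          filter_upwards [hlow, hnmv, hcoep'', hcoeq] with ω h1 h2 h3 h4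
          rw [h4]
          rw [h3] at h1
          have hmul := mul_le_mul_of_nonneg_left h1 hvpos.le
          have e6 : v * (1/v * p.2 ω - (k ω * N.nm (N.rsm (1/v) p.1 - y
              + N.rsm (s/v) (x - x₀)) ω - s/v * f (x - x₀) ω))
              = p.2 ω - (k ω * (v * N.nm (N.rsm (1/v) p.1 - y + N.rsm (s/v) (x - x₀)) ω)
                - s * f (x - x₀) ω) := by
            field_simp
          rw [e6] at hmul
          rw [abs_of_pos hvpos] at h2
          rw [← h2] at hmul
          have : u * α ω = -(v * α ω) := by rw [hv]; ring
          rw [this]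
          linarith
        · -- u = 0
          subst hu
          have hdom := hΓdom p hp s hs x hx
          have e7 : p.1 + N.rsm 0 y = p.1 := by rw [N.rsm_zero, add_zero]
          rw [e7]
          filter_upwards [hdom, hcoeq] with ω h1 h2
          rw [h2]
          simpa using h1
        · -- u > 0
          have hp'' : ((N.rsm (1/u) p.1, cstL P (1/u) * p.2) : E × L0 P) ∈ Γ :=
            hΓsc (1/u) p hp
          have hupp := hαupp _ hp'' (s/u) (by positivity) x hx
          have eE : N.rsm u ((N.rsm (1/u) p.1, cstL P (1/u) * p.2).1 + y + N.rsm (s/u) (x - x₀))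
              = p.1 + N.rsm u y + N.rsm s (x - x₀) := by
            show N.rsm u (N.rsm (1/u) p.1 + y + N.rsm (s/u) (x - x₀)) = _
            rw [N.rsm_add_x, N.rsm_add_x, ← N.rsm_mul, ← N.rsm_mul]
            have h1 : u * (1/u) = 1 := by field_simp
            have h2 : u * (s/u) = s := by field_simp
            rw [h1, h2, N.rsm_one]
          have hnmu := N.nm_rsm u ((N.rsm (1/u) p.1, cstL P (1/u) * p.2).1 + y
            + N.rsm (s/u) (x - x₀))
          rw [eE] at hnmu
          have hcoep'' : ∀ᵐ ω ∂P, (cstL P (1/u) * p.2) ω = (1/u) * p.2 ω := by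
            filter_upwards [coe_mul (cstL P (1/u)) p.2, cstL_coe (P := P) (1/u)] with ω h1 h2
            rw [h1, h2]
          filter_upwards [hupp, hnmu, hcoep'', hcoeq] with ω h1 h2 h3 h4
          rw [h4]
          rw [h3] at h1
          have hmul := mul_le_mul_of_nonneg_left h1 hu.le
          have e6 : u * (k ω * N.nm (N.rsm (1/u) p.1 + y + N.rsm (s/u) (x - x₀)) ω
              - s/u * f (x - x₀) ω - 1/u * p.2 ω)
              = k ω * (u * N.nm (N.rsm (1/u) p.1 + y + N.rsm (s/u) (x - x₀)) ω)
                - s * f (x - x₀) ω - p.2 ω := by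
            field_simp
          rw [e6] at hmul
          rw [abs_of_pos hu] at h2
          rw [← h2] at hmul
          linarith
    -- contradiction with maximality
    have : Γ' ⊆ Γ := hΓmax.2 hΓ'D hΓΓ'
    exact hy α (this hyα)
  -- the functional
  choose hfun hmem using htot
  have huniq : ∀ (z : E) (r : L0 P), (z, r) ∈ Γ → r = hfun z := by
    have aux : ∀ (z : E) (r r' : L0 P), (z, r) ∈ Γ → (z, r') ∈ Γ →
        ∀ᵐ ω ∂P, r ω - r' ω ≤ 0 := by
      intro z r r' hr hr'
      have hd : ((z, r) : E × L0 P) - (z, r') ∈ Γ := hΓsub _ hr _ hr'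
      have : ((z, r) : E × L0 P) - (z, r') = ((0 : E), r - r') := by
        apply Prod.ext
        · show z - z = 0; simp
        · rfl
      rw [this] at hd
      have hdom := hΓdom _ hd 0 le_rfl x₀ hx₀G
      simp only [N.rsm_zero, add_zero, zero_add] at hdom
      filter_upwards [hdom, coe_sub r r', N.nm_zero_ae] with ω h1 h2 h3
      rw [← h2]
      rw [h3] at h1
      simpa using h1
    intro z r hr
    apply L0.ext'
    filter_upwards [aux z r (hfun z) hr (hmem z), aux z (hfun z) r (hmem z) hr] with ω h1 h2
    linarith
  refine ⟨hfun, ?_, ?_, ?_, ?_⟩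
  · intro x y
    have : ((x + y, hfun x + hfun y) : E × L0 P) ∈ Γ := hadd _ (hmem x) _ (hmem y)
    exact (huniq _ _ this).symm
  · intro t x
    have := hΓsc t _ (hmem x)
    exact (huniq _ _ this).symm
  · intro y₀
    have hdom := hΓdom _ (hmem y₀) 0 le_rfl x₀ hx₀G
    simp only [N.rsm_zero, add_zero] at hdom
    filter_upwards [hdom] with ω h1
    simpa using h1
  · intro x hx
    have hneg : hfun (-(x - x₀)) = - hfun (x - x₀) := by
      have h1 := hΓsc (-1) _ (hmem (x - x₀))
      rw [N.rsm_neg_one] at h1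
      have h2 := huniq _ _ h1
      rw [← h2, cstL_neg, cstL_one, Lneg_one_mul]
    have hdom := hΓdom _ (hmem (-(x - x₀))) 1 zero_le_one x hx
    rw [N.rsm_one] at hdom
    have e : -(x - x₀) + (x - x₀) = (0 : E) := by abel
    rw [e] at hdom
    rw [hneg] at hdom
    filter_upwards [hdom, coe_neg (hfun (x - x₀)), N.nm_zero_ae] with ω h1 h2 h3
    rw [h2, h3] at h1
    have : -(hfun (x - x₀) ω) ≤ - f (x - x₀) ω := by simpa using h1
    linarith

end HB

namespace RNModule

lemma sub_smul' (N : RNModule P E) (ξ η : L0 P) (x : E) :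
    N.smul (ξ - η) x = N.smul ξ x - N.smul η x := by
  rw [sub_eq_add_neg, N.add_smul, N.neg_smul', sub_eq_add_neg]

end RNModule

section Upgrade

variable [IsProbabilityMeasure P]

set_option maxHeartbeats 1000000 in
lemma hb_smul (N : RNModule P E) (k : L0 P) (hk : ∀ᵐ ω ∂P, 0 ≤ k ω)
    (h : E → L0 P) (hadd : ∀ x y, h (x + y) = h x + h y)
    (hhom : ∀ t x, h (N.rsm t x) = cstL P t * h x)
    (hbd : ∀ y, ∀ᵐ ω ∂P, |h y ω| ≤ k ω * N.nm y ω) :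
    ∀ (ξ : L0 P) (y : E), h (N.smul ξ y) = ξ * h y := by
  classical
  have hzero : h 0 = 0 := by
    have := hadd 0 0; rw [add_zero] at this; exact right_eq_add.mp this
  have hneg : ∀ x, h (-x) = -(h x) := by
    intro x
    have := hadd x (-x); rw [add_neg_cancel, hzero] at this
    exact (neg_eq_of_add_eq_zero_right this.symm).symm
  have hsub : ∀ x z, h (x - z) = h x - h z := by
    intro x z; rw [sub_eq_add_neg, hadd, hneg, sub_eq_add_neg]
  -- Step A : indicator homogeneity
  have stepA : ∀ (A : Set Ω) (hA : MeasurableSet A) (y : E),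
      h (N.smul (indL0 P A hA) y) = indL0 P A hA * h y := by
    intro A hA y
    have hsplit : N.smul (indL0 P A hA) y + N.smul (indL0 P Aᶜ hA.compl) y = y := by
      rw [← N.add_smul, indL0_add_compl, N.one_smul]
    have hy' : h y = h (N.smul (indL0 P A hA) y) + h (N.smul (indL0 P Aᶜ hA.compl) y) := by
      rw [← hadd, hsplit]
    have hy'' := coe_add (h (N.smul (indL0 P A hA) y)) (h (N.smul (indL0 P Aᶜ hA.compl) y))
    rw [← hy'] at hy''
    apply L0.ext'
    filter_upwards [indL0_coe (P := P) hA, indL0_coe (P := P) hA.compl,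
      hbd (N.smul (indL0 P A hA) y), N.nm_smul (indL0 P A hA) y,
      hbd (N.smul (indL0 P Aᶜ hA.compl) y), N.nm_smul (indL0 P Aᶜ hA.compl) y,
      coe_mul (indL0 P A hA) (h y), hy''] with ω hA1 hA2 hb1 hn1 hb2 hn2 hm hyy
    rw [hm]
    by_cases hω : ω ∈ A
    · have he : indL0 P A hA ω = 1 := by rw [hA1]; simp [Set.indicator_apply, hω]
      have he' : indL0 P Aᶜ hA.compl ω = 0 := by
        rw [hA2]; simp [Set.indicator_apply, hω]
      rw [hn2, he'] at hb2
      have hz2 : h (N.smul (indL0 P Aᶜ hA.compl) y) ω = 0 := by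
        have : |h (N.smul (indL0 P Aᶜ hA.compl) y) ω| ≤ 0 := by simpa using hb2
        exact abs_nonpos_iff.mp this
      rw [hz2] at hyy
      rw [he, one_mul, hyy, add_zero]
    · have he : indL0 P A hA ω = 0 := by rw [hA1]; simp [Set.indicator_apply, hω]
      rw [hn1, he] at hb1
      have hz1 : h (N.smul (indL0 P A hA) y) ω = 0 := by
        have : |h (N.smul (indL0 P A hA) y) ω| ≤ 0 := by simpa using hb1
        exact abs_nonpos_iff.mp this
      rw [hz1, he, zero_mul]
  intro ξ y
  obtain hXm := ξ.aestronglyMeasurable.aemeasurable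
  set X : Ω → ℝ := hXm.mk _ with hXdef
  have hXmeas : Measurable X := hXm.measurable_mk
  have hXe : (⇑ξ : Ω → ℝ) =ᵐ[P] X := hXm.ae_eq_mk
  set s : ℕ → L0 P := fun n => AEEqFun.mk (fun ω => ((⌊((n:ℝ)+1) * X ω⌋ : ℤ) : ℝ) / ((n:ℝ)+1))
    (((measurable_from_top.comp ((hXmeas.const_mul _).floor)).div_const _).aestronglyMeasurable)
    with hsdef
  have hscoe : ∀ n : ℕ, ∀ᵐ ω ∂P, s n ω = ((⌊((n:ℝ)+1) * X ω⌋ : ℤ) : ℝ) / ((n:ℝ)+1) :=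
    fun n => AEEqFun.coeFn_mk _ _
  -- Step B : homogeneity w.r.t. the countably-valued `s n`
  have stepB : ∀ n : ℕ, h (N.smul (s n) y) = s n * h y := by
    intro n
    set d : ℝ := (n:ℝ) + 1 with hd
    have hdpos : (0:ℝ) < d := by positivity
    set A : ℤ → Set Ω := fun j => {ω | ⌊d * X ω⌋ = j} with hA
    have hAmeas : ∀ j, MeasurableSet (A j) := fun j =>
      (hXmeas.const_mul d).floor (measurableSet_singleton j)
    have hkey : ∀ j : ℤ, indL0 P (A j) (hAmeas j) * s n
        = indL0 P (A j) (hAmeas j) * cstL P ((j : ℝ) / d) := by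
      intro j
      apply L0.ext'
      filter_upwards [coe_mul (indL0 P (A j) (hAmeas j)) (s n),
        coe_mul (indL0 P (A j) (hAmeas j)) (cstL P ((j : ℝ) / d)),
        indL0_coe (P := P) (hAmeas j), hscoe n, cstL_coe (P := P) ((j : ℝ) / d)]
        with ω h1 h2 h3 h4 h5
      rw [h1, h2, h3, h4, h5]
      by_cases hω : ω ∈ A j
      · have hj : ⌊d * X ω⌋ = j := hω
        rw [hj]
      · rw [Set.indicator_apply, if_neg hω, zero_mul, zero_mul]
    have hid : ∀ j : ℤ, indL0 P (A j) (hAmeas j) * h (N.smul (s n) y)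
        = indL0 P (A j) (hAmeas j) * (cstL P ((j : ℝ) / d) * h y) := by
      intro j
      have e1 : N.smul (indL0 P (A j) (hAmeas j)) (N.smul (s n) y)
          = N.smul (indL0 P (A j) (hAmeas j)) (N.rsm ((j : ℝ) / d) y) := by
        rw [← N.mul_smul, hkey j, N.mul_smul]; rfl
      have e2 := stepA (A j) (hAmeas j) (N.smul (s n) y)
      rw [e1] at e2
      rw [← e2, stepA (A j) (hAmeas j) (N.rsm ((j : ℝ) / d) y), hhom]
    apply L0.ext'
    have hidae : ∀ᵐ ω ∂P, ∀ j : ℤ, (indL0 P (A j) (hAmeas j) * h (N.smul (s n) y)) ω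
        = (indL0 P (A j) (hAmeas j) * (cstL P ((j : ℝ) / d) * h y)) ω :=
      ae_all_iff.mpr fun j => by rw [hid j]; exact Filter.Eventually.of_forall fun a => rfl
    have hindae : ∀ᵐ ω ∂P, ∀ j : ℤ, (indL0 P (A j) (hAmeas j) * h (N.smul (s n) y)) ω
        = indL0 P (A j) (hAmeas j) ω * h (N.smul (s n) y) ω :=
      ae_all_iff.mpr fun j => coe_mul _ _
    have hindae2 : ∀ᵐ ω ∂P, ∀ j : ℤ,
        (indL0 P (A j) (hAmeas j) * (cstL P ((j : ℝ) / d) * h y)) ω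
        = indL0 P (A j) (hAmeas j) ω * ((cstL P ((j:ℝ)/d)) ω * h y ω) := by
      apply ae_all_iff.mpr
      intro j
      filter_upwards [coe_mul (indL0 P (A j) (hAmeas j)) (cstL P ((j : ℝ) / d) * h y),
        coe_mul (cstL P ((j : ℝ) / d)) (h y)] with ω h1 h2
      rw [h1, h2]
    have hindcoe : ∀ᵐ ω ∂P, ∀ j : ℤ, indL0 P (A j) (hAmeas j) ω
        = (A j).indicator (fun _ => (1:ℝ)) ω := ae_all_iff.mpr fun j => indL0_coe _
    have hcstcoe : ∀ᵐ ω ∂P, ∀ j : ℤ, (cstL P ((j:ℝ)/d)) ω = (j:ℝ)/d :=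
      ae_all_iff.mpr fun j => cstL_coe _
    filter_upwards [hidae, hindae, hindae2, hindcoe, hcstcoe, hscoe n,
      coe_mul (s n) (h y)] with ω h1 h2 h3 h4 h5 h6 h7
    set j : ℤ := ⌊d * X ω⌋ with hj
    have hωA : ω ∈ A j := rfl
    have hind1 : (A j).indicator (fun _ => (1:ℝ)) ω = 1 := by
      simp [Set.indicator_apply, hωA]
    have hmain := h1 j
    rw [h2 j, h3 j, h4 j, hind1, one_mul, one_mul, h5 j] at hmain
    rw [h7, h6, hmain]
  -- Step C : pass to the limit
  have happrox : ∀ n : ℕ, ∀ᵐ ω ∂P,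
      |h (N.smul ξ y) ω - ξ ω * h y ω| ≤ 2 * (k ω * N.nm y ω) / ((n:ℝ)+1) := by
    intro n
    set d : ℝ := (n:ℝ) + 1 with hd
    have hdpos : (0:ℝ) < d := by positivity
    have hdiff : h (N.smul ξ y) - h (N.smul (s n) y) = h (N.smul (ξ - s n) y) := by
      rw [← hsub, ← N.sub_smul']
    have hdiffae := coe_sub (h (N.smul ξ y)) (h (N.smul (s n) y))
    rw [hdiff] at hdiffae
    have hBae := coe_mul (s n) (h y)
    rw [← stepB n] at hBae
    have hclose : ∀ᵐ ω ∂P, |ξ ω - s n ω| ≤ 1 / d := by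
      filter_upwards [hscoe n, hXe] with ω h1 h2
      rw [h1, h2]
      have hz1 := Int.floor_le (d * X ω)
      have hz2 := (Int.lt_floor_add_one (d * X ω)).le
      have e : X ω - ((⌊d * X ω⌋ : ℤ) : ℝ)/d = (d * X ω - ((⌊d * X ω⌋ : ℤ) : ℝ))/d := by
        rw [sub_div, mul_comm, mul_div_assoc, div_self hdpos.ne', mul_one]
      rw [e, abs_div, abs_of_pos hdpos, abs_of_nonneg (by linarith)]
      gcongr
      linarith
    filter_upwards [hbd (N.smul (ξ - s n) y), N.nm_smul (ξ - s n) y, coe_sub ξ (s n),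
      hclose, hbd y, hdiffae, hBae, hk, N.nm_nonneg y] with ω b1 b2 b3 b4 b5 b6 b7 b8 b9
    rw [b2, b3] at b1
    rw [b6] at b1
    -- b1 : |h(ξ•y) ω - h(sn•y) ω| ≤ k ω * (|ξ ω - s n ω| * nm y ω)
    -- b7 : h(sn•y) ω = s n ω * h y ω
    have key1 : |h (N.smul ξ y) ω - h (N.smul (s n) y) ω| ≤ k ω * N.nm y ω / d := by
      refine b1.trans ?_
      rw [div_eq_mul_inv]
      have : |ξ ω - s n ω| * N.nm y ω ≤ d⁻¹ * N.nm y ω := by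
        apply mul_le_mul_of_nonneg_right _ b9
        rw [← one_div d]; exact b4
      nlinarith [this]
    have key2 : |h (N.smul (s n) y) ω - ξ ω * h y ω| ≤ k ω * N.nm y ω / d := by
      rw [b7]
      have e2 : s n ω * h y ω - ξ ω * h y ω = -((ξ ω - s n ω) * h y ω) := by ring
      rw [e2, abs_neg, abs_mul]
      have h1 : |ξ ω - s n ω| * |h y ω| ≤ (1/d) * (k ω * N.nm y ω) := by
        apply mul_le_mul b4 b5 (abs_nonneg _)
        positivity
      calc |ξ ω - s n ω| * |h y ω| ≤ (1/d) * (k ω * N.nm y ω) := h1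
        _ = k ω * N.nm y ω / d := by ring
    calc |h (N.smul ξ y) ω - ξ ω * h y ω|
        ≤ |h (N.smul ξ y) ω - h (N.smul (s n) y) ω|
          + |h (N.smul (s n) y) ω - ξ ω * h y ω| := abs_sub_le _ _ _
      _ ≤ k ω * N.nm y ω / d + k ω * N.nm y ω / d := add_le_add key1 key2
      _ = 2 * (k ω * N.nm y ω) / d := by ring
  apply L0.ext'
  filter_upwards [ae_all_iff.mpr happrox, coe_mul ξ (h y), hk, N.nm_nonneg y]
    with ω h1 h2 h3 h4
  rw [h2]
  have hC : Filter.Tendsto (fun n : ℕ => 2 * (k ω * N.nm y ω) / ((n:ℝ)+1))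
      Filter.atTop (nhds 0) := by
    have heq : (fun n : ℕ => 2 * (k ω * N.nm y ω) / ((n:ℝ)+1))
        = fun n : ℕ => (2 * (k ω * N.nm y ω)) * (1/((n:ℝ)+1)) := by
      funext n; ring
    rw [heq]
    have := tendsto_one_div_add_atTop_nhds_zero_nat.const_mul (2 * (k ω * N.nm y ω))
    simpa using this
  have hle : |h (N.smul ξ y) ω - ξ ω * h y ω| ≤ 0 := ge_of_tendsto' hC fun n => h1 n
  have := abs_nonpos_iff.mp hle
  linarith [sub_eq_zero.mp this]

end Upgrade

end Aux


/-- Lemma 4.12. If `x₀ ∈ G` satisfies `G ∩ (K(f,k) + x₀) = {x₀}`, with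
`G` an `L⁰(𝓕)`-convex subset with the countable concatenation property, then there is
`g ∈ E*` with `⋁g(G) = g(x₀)` and `‖f - g‖* ≤ k`. -/
theorem exists_support_functional_of_cone_maximal
    {Ω : Type*} [MeasurableSpace Ω] {P : Measure Ω} [IsProbabilityMeasure P]
    {E : Type*} [AddCommGroup E] (N : RNModule P E)
    (hCCE : N.HasCC Set.univ)
    (k : L0 P) (hk : k ∈ L0pp P)
    (f : E → L0 P) (hf : N.IsDual f)
    (G : Set E) (hGconv : N.L0Convex G) (hGCC : N.HasCC G)
    (x₀ : E) (hx₀G : x₀ ∈ G)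
    (hx₀ : G ∩ ((fun y => y + x₀) '' N.Kcone f k) = {x₀}) :
    ∃ g : E → L0 P, N.IsDual g ∧ IsSupOnR g G (g x₀) ∧
      ∃ nfg : L0 P, N.IsDualNorm (fun x => f x - g x) nfg ∧ ∀ᵐ ω ∂P, nfg ω ≤ k ω := by
  classical
  obtain ⟨hfadd, hfsmul, ξf, hξf0, hξfb⟩ := hf
  have hf' : N.IsDual f := ⟨hfadd, hfsmul, ξf, hξf0, hξfb⟩
  have hk0 : ∀ᵐ ω ∂P, 0 ≤ k ω := by filter_upwards [hk] with ω h; exact h.le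
  -- Step 1: the key inequality `f(x - x₀) ≤ k‖x - x₀‖` on `G`
  have hKey : ∀ x ∈ G, ∀ᵐ ω ∂P, f (x - x₀) ω ≤ k ω * N.nm (x - x₀) ω := by
    intro x hx
    set c := x - x₀ with hc
    obtain hFm := (f c).aestronglyMeasurable.aemeasurable
    obtain hKm := (k * N.nm c).aestronglyMeasurable.aemeasurable
    have hFe : ⇑(f c) =ᵐ[P] hFm.mk _ := hFm.ae_eq_mk
    have hKe : ⇑(k * N.nm c) =ᵐ[P] hKm.mk _ := hKm.ae_eq_mk
    set B : Set Ω := {ω | hKm.mk _ ω < hFm.mk _ ω} with hB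
    have hBm : MeasurableSet B := measurableSet_lt hKm.measurable_mk hFm.measurable_mk
    set e := indL0 P B hBm with he
    set e' := indL0 P Bᶜ hBm.compl with he'
    have hx'G : N.smul e x + N.smul e' x₀ ∈ G :=
      hGconv x hx x₀ hx₀G e e' (indL0_nonneg _) (indL0_nonneg _) (indL0_add_compl hBm)
    set x' := N.smul e x + N.smul e' x₀ with hx'
    have h0 : N.smul e x₀ + N.smul e' x₀ = x₀ := by
      rw [← N.add_smul, indL0_add_compl, N.one_smul]
    have hxd : x' - x₀ = N.smul e c := by
      rw [hc, N.smul_sub', hx']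
      calc N.smul e x + N.smul e' x₀ - x₀
          = N.smul e x + N.smul e' x₀ - (N.smul e x₀ + N.smul e' x₀) := by rw [h0]
        _ = N.smul e x - N.smul e x₀ := by abel
    have hmem : x' ∈ (fun y => y + x₀) '' N.Kcone f k := by
      refine ⟨x' - x₀, ?_, by show x' - x₀ + x₀ = x'; rw [sub_add_cancel]⟩
      rw [hxd]
      show ∀ᵐ ω ∂P, k ω * N.nm (N.smul e c) ω ≤ f (N.smul e c) ω
      have hfe : f (N.smul e c) = e * f c := hfsmul e c
      rw [hfe]
      filter_upwards [N.nm_smul e c, coe_mul e (f c), indL0_coe (P := P) hBm, hFe, hKe,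
        coe_mul k (N.nm c)] with ω a1 a2 a3 a4 a5 a6
      rw [a1, a2, a3]
      by_cases hω : ω ∈ B
      · have h1 : hKm.mk _ ω < hFm.mk _ ω := hω
        rw [← a5, a6] at h1
        rw [← a4] at h1
        simp only [Set.indicator_apply, if_pos hω]
        simp only [abs_one, one_mul]
        exact h1.le
      · simp only [Set.indicator_apply, if_neg hω]
        simp
    have hx'eq : x' = x₀ := by
      have : x' ∈ ({x₀} : Set E) := by rw [← hx₀]; exact ⟨hx'G, hmem⟩
      exact this
    have hec : N.smul e c = 0 := by rw [← hxd, hx'eq, sub_self]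
    have hnm0 : ∀ᵐ ω ∂P, |e ω| * N.nm c ω = 0 := by
      have h1 := N.nm_smul e c
      rw [hec, N.nm_zero] at h1
      filter_upwards [h1, coe_zero (P := P)] with ω a1 a2
      rw [← a1, a2]
    filter_upwards [hnm0, indL0_coe (P := P) hBm, hFe, hKe, coe_mul k (N.nm c),
      hξfb c, N.nm_nonneg c] with ω a1 a2 a3 a4 a5 a6 a7
    by_contra hcon
    push_neg at hcon
    have hωB : ω ∈ B := by
      show hKm.mk _ ω < hFm.mk _ ω
      rw [← a4, ← a3, a5]
      exact hcon
    have he1 : e ω = 1 := by rw [a2]; simp [Set.indicator_apply, hωB]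
    rw [he1] at a1
    simp only [abs_one, one_mul] at a1
    rw [a1, mul_zero] at a6
    have hfc0 : f c ω = 0 := abs_nonpos_iff.mp a6
    rw [a1, mul_zero, hfc0] at hcon
    exact lt_irrefl 0 hcon
  -- Step 2: the Hahn–Banach extension
  obtain ⟨h, hadd, hhom, hub, hminor⟩ :=
    exists_hb N k hk0 f hf' G hGconv x₀ hx₀G hKey
  have hhneg : ∀ z, h (-z) = - h z := by
    intro z
    have h1 := hhom (-1) z
    rw [N.rsm_neg_one, cstL_neg, cstL_one, Lneg_one_mul] at h1
    exact h1
  have habs : ∀ z, ∀ᵐ ω ∂P, |h z ω| ≤ k ω * N.nm z ω := by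
    intro z
    have h2 := hub (-z)
    rw [hhneg z] at h2
    filter_upwards [hub z, h2, N.nm_neg_ae z, coe_neg (h z)] with ω a1 a2 a3 a4
    rw [a4, a3] at a2
    rw [abs_le]
    exact ⟨by linarith, a1⟩
  have hsmul := hb_smul N k hk0 h hadd hhom habs
  have hzero : h 0 = 0 := by
    have := hadd 0 0; rw [add_zero] at this; exact right_eq_add.mp this
  have hhsub : ∀ x z, h (x - z) = h x - h z := by
    intro x z
    have h1 := hadd (x - z) z
    rw [sub_add_cancel] at h1
    rw [h1]; abel
  -- the supporting functional
  set g : E → L0 P := fun x => f x - h x with hg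
  have hfg : (fun x => f x - g x) = h := by
    funext x
    rw [hg]
    exact _root_.sub_sub_cancel (f x) (h x)
  -- admissible bounds for `h = f - g`
  set Sadm : Set (L0 P) := {ξ | (∀ᵐ ω ∂P, 0 ≤ ξ ω) ∧
    ∀ x, ∀ᵐ ω ∂P, |(f x - g x) ω| ≤ ξ ω * N.nm x ω} with hSadm
  have hkadm : k ∈ Sadm := by
    refine ⟨hk0, fun x => ?_⟩
    rw [hg, _root_.sub_sub_cancel]
    exact habs x
  have hlb0 : ∀ ξ ∈ Sadm, ∀ᵐ ω ∂P, (0 : L0 P) ω ≤ ξ ω := by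
    intro ξ hξ
    filter_upwards [hξ.1, coe_zero (P := P)] with ω a1 a2
    rw [a2]; exact a1
  obtain ⟨nfg, hnfglb, hnfgglb⟩ := exists_glb Sadm ⟨k, hkadm⟩ 0 hlb0
  refine ⟨g, ⟨?_, ?_, ?_⟩, ⟨?_, ?_⟩, nfg, ⟨?_, ?_⟩, ?_⟩
  · -- additivity
    intro x z
    rw [hg]
    show f (x + z) - h (x + z) = (f x - h x) + (f z - h z)
    rw [hfadd, hadd]; abel
  · -- L0-homogeneity
    intro ξ x
    rw [hg]
    show f (N.smul ξ x) - h (N.smul ξ x) = ξ * (f x - h x)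
    rw [hfsmul, hsmul, Lmul_sub]
  · -- boundedness
    refine ⟨ξf + k, ?_, ?_⟩
    · filter_upwards [hξf0, hk0, coe_add ξf k] with ω a1 a2 a3
      rw [a3]; linarith
    · intro x
      rw [hg]
      show ∀ᵐ ω ∂P, |(f x - h x) ω| ≤ (ξf + k) ω * N.nm x ω
      filter_upwards [coe_sub (f x) (h x), coe_add ξf k, hξfb x, habs x,
        N.nm_nonneg x] with ω a1 a2 a3 a4 a5
      rw [a1, a2]
      calc |f x ω - h x ω| ≤ |f x ω| + |h x ω| := abs_sub _ _
        _ ≤ ξf ω * N.nm x ω + k ω * N.nm x ω := add_le_add a3 a4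
        _ = (ξf ω + k ω) * N.nm x ω := by ring
  · -- sup attained at x₀
    intro x hx
    have e1 : f (x - x₀) = f x - f x₀ := N.dual_sub hf' x x₀
    have e2 : h (x - x₀) = h x - h x₀ := hhsub x x₀
    have hmin := hminor x hx
    rw [e1, e2] at hmin
    show ∀ᵐ ω ∂P, (f x - h x) ω ≤ (f x₀ - h x₀) ω
    filter_upwards [hmin, coe_sub (f x) (h x), coe_sub (f x₀) (h x₀),
      coe_sub (f x) (f x₀), coe_sub (h x) (h x₀)] with ω a1 a2 a3 a4 a5
    rw [a2, a3]
    rw [a4, a5] at a1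
    linarith
  · -- least upper bound property (trivial side)
    intro cc hcc
    exact hcc x₀ hx₀G
  · -- nfg is a lower bound of admissible constants
    intro ξ hξ
    exact hnfglb ξ hξ
  · -- nfg is the greatest lower bound
    intro cc hcc
    exact hnfgglb cc fun ξ hξ => hcc ξ hξ
  · -- nfg ≤ k
    exact hnfglb k hkadm


end GYY
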